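/- arXiv:2107.11058 — 11 statements merged into one kernel-verified Lean document; each statement's English description precedes it below -/
import Mathlib

section
/- For every natural number r and every real number x, the telescoping identity 2g(x) + ∑_{j=1}^{r} g(2^j x) = {2^{r+1} x}* - 1_{{x}* > 1/2} holds, where 1_{{x}* > 1/2} equals 1 if {x}* > 1/2 and 0 otherwise. -/
noncomputable def sawtooth (x : ℝ) : ℝ := x + ⌊(1:ℝ)/2 - x⌋

noncomputable def upperFrac (x : ℝ) : ℝ := x - ⌈x⌉ + 1

lemma saw_key (y : ℝ) : sawtooth y = upperFrac (2*y) - upperFrac y := by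
  have h1 : y ≤ (⌈y⌉ : ℝ) := Int.le_ceil y
  have h2 : (⌈y⌉ : ℝ) < y + 1 := Int.ceil_lt_add_one y
  unfold sawtooth upperFrac
  rcases le_or_gt y ((⌈y⌉:ℝ) - 1/2) with h | h
  · have hf : ⌊(1:ℝ)/2 - y⌋ = 1 - ⌈y⌉ := by
      rw [Int.floor_eq_iff]
      push_cast
      constructor <;> linarith
    have hc : ⌈2*y⌉ = 2*⌈y⌉ - 1 := by
      rw [Int.ceil_eq_iff]
      push_cast
      constructor <;> linarith
    rw [hf, hc]; push_cast; ring
  · have hf : ⌊(1:ℝ)/2 - y⌋ = - ⌈y⌉ := by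
      rw [Int.floor_eq_iff]
      push_cast
      constructor <;> linarith
    have hc : ⌈2*y⌉ = 2*⌈y⌉ := by
      rw [Int.ceil_eq_iff]
      push_cast
      constructor <;> linarith
    rw [hf, hc]; push_cast; ring

lemma head_key (x : ℝ) :
    2 * sawtooth x = upperFrac (2*x) - (if upperFrac x > 1/2 then 1 else 0) := by
  have h1 : x ≤ (⌈x⌉ : ℝ) := Int.le_ceil x
  have h2 : (⌈x⌉ : ℝ) < x + 1 := Int.ceil_lt_add_one x
  have hcond : (upperFrac x > 1/2) ↔ x > (⌈x⌉:ℝ) - 1/2 := by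
    unfold upperFrac; constructor <;> intro <;> linarith
  unfold sawtooth upperFrac
  rcases le_or_gt x ((⌈x⌉:ℝ) - 1/2) with h | h
  · have hf : ⌊(1:ℝ)/2 - x⌋ = 1 - ⌈x⌉ := by
      rw [Int.floor_eq_iff]; push_cast; constructor <;> linarith
    have hc : ⌈2*x⌉ = 2*⌈x⌉ - 1 := by
      rw [Int.ceil_eq_iff]; push_cast; constructor <;> linarith
    rw [if_neg (by linarith), hf, hc]; push_cast; ring
  · have hf : ⌊(1:ℝ)/2 - x⌋ = - ⌈x⌉ := by
      rw [Int.floor_eq_iff]; push_cast; constructor <;> linarith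
    have hc : ⌈2*x⌉ = 2*⌈x⌉ := by
      rw [Int.ceil_eq_iff]; push_cast; constructor <;> linarith
    rw [if_pos (by linarith), hf, hc]; push_cast; ring

theorem stmt_2 (r : ℕ) (x : ℝ) :
    2 * sawtooth x + ∑ j ∈ Finset.Icc 1 r, sawtooth (2^j * x)
      = upperFrac (2^(r+1) * x) - (if upperFrac x > 1/2 then 1 else 0) := by
  induction r with
  | zero =>
      simp only [Finset.Icc_self, Finset.Icc_eq_empty_of_lt (by norm_num : (1:ℕ) > 0),
        Finset.sum_empty]
      have := head_key x
      simpa [pow_one] using this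
  | succ n ih =>
      rw [Finset.sum_Icc_succ_top (by omega : 1 ≤ n + 1)]
      have h := saw_key (2^(n+1) * x)
      have h2 : 2 * (2^(n+1) * x) = 2^(n+2) * x := by ring
      rw [h2] at h
      rw [← add_assoc, ih, h]
      ring
end

section
/- For every natural number r and every real number x, 2g(x) + ∑_{j=1}^{r} g(2^j x) ≤ 1. -/
lemma saw_le (x : ℝ) : sawtooth x ≤ 1/2 := by
  have := Int.floor_le ((1:ℝ)/2 - x); unfold sawtooth; linarith

lemma saw_gt (x : ℝ) : -(1/2) < sawtooth x := by
  have := Int.lt_floor_add_one ((1:ℝ)/2 - x); unfold sawtooth; linarith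

lemma saw_key_s3 (r : ℕ) : ∀ x : ℝ,
    (2 * sawtooth x + ∑ i ∈ Finset.range r, sawtooth (2^(i+1) * x) ≤ 1) ∧
    (sawtooth x ≤ 0 → 2 * sawtooth x + ∑ i ∈ Finset.range r, sawtooth (2^(i+1) * x) ≤ 0) := by
  induction r with
  | zero =>
    intro x
    have := saw_le x
    simp only [Finset.range_zero, Finset.sum_empty, add_zero]
    exact ⟨by linarith, fun h => by linarith⟩
  | succ r ih =>
    intro x
    have hsum : ∑ i ∈ Finset.range (r+1), sawtooth (2^(i+1) * x)
        = (∑ i ∈ Finset.range r, sawtooth (2^(i+1) * (2*x))) + sawtooth (2^(0+1) * x) := by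
      rw [Finset.sum_range_succ']
      congr 1
      apply Finset.sum_congr rfl
      intro i _
      congr 1
      ring
    obtain ⟨h1, h2⟩ := ih (2*x)
    obtain ⟨e, hee⟩ : ∃ e : ℤ, (e:ℝ) = 2 * sawtooth x - sawtooth (2*x) :=
      ⟨2 * ⌊(1:ℝ)/2 - x⌋ - ⌊(1:ℝ)/2 - 2*x⌋, by unfold sawtooth; push_cast; ring⟩
    have hx1 := saw_le x
    have hx2 := saw_gt x
    have hy1 := saw_le (2*x)
    have hy2 := saw_gt (2*x)
    have h20 : (2:ℝ)^(0+1) * x = 2 * x := by ring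
    rw [hsum, h20]
    have he1 : e ≤ 1 := by
      have : (e:ℝ) < 2 := by linarith
      exact_mod_cast Int.lt_add_one_iff.mp (by exact_mod_cast this)
    have he2 : -1 ≤ e := by
      have : (-2:ℝ) < e := by linarith
      have h := Int.lt_iff_add_one_le.mp (show (-2:ℤ) < e by exact_mod_cast this)
      omega
    constructor
    · rcases eq_or_lt_of_le he1 with heq | hlt
      · -- e = 1, so sawtooth (2x) = 2 sawtooth x - 1 ≤ 0
        have he : (e:ℝ) = 1 := by exact_mod_cast heq
        have hle : sawtooth (2*x) ≤ 0 := by linarith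
        have := h2 hle
        linarith
      · -- e ≤ 0
        have : e ≤ 0 := by omega
        have : (e:ℝ) ≤ 0 := by exact_mod_cast this
        linarith
    · intro hx0
      -- then e < 1/2 so e ≤ 0
      have he0 : e ≤ 0 := by
        have : (e:ℝ) < 1 := by linarith
        have : e < 1 := by exact_mod_cast this
        omega
      rcases eq_or_lt_of_le he0 with heq | hlt
      · have : (e:ℝ) = 0 := by exact_mod_cast heq
        have hle : sawtooth (2*x) ≤ 0 := by linarith
        have := h2 hle
        linarith
      · have : e ≤ -1 := by omega
        have : (e:ℝ) ≤ -1 := by exact_mod_cast this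
        linarith

theorem stmt_3 (r : ℕ) (x : ℝ) :
    2 * sawtooth x + ∑ j ∈ Finset.Icc 1 r, sawtooth (2^j * x) ≤ 1 := by
  have h : ∑ j ∈ Finset.Icc 1 r, sawtooth (2^j * x)
      = ∑ i ∈ Finset.range r, sawtooth (2^(i+1) * x) := by
    induction r with
    | zero => simp
    | succ n ihn =>
      rw [Finset.sum_Icc_succ_top (by omega), ihn, Finset.sum_range_succ]
  rw [h]
  exact (saw_key_s3 r x).1
end

section
/- Let r be a natural number and m = 2^r. For every integer k with 1 ≤ k ≤ m, ∑_{j=1}^{r} g(k/2^j) + 2 g(k/2^{r+1}) = 1. -/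
lemma floor_real_int_div_nat (n : ℤ) (d : ℕ) : ⌊((n:ℝ)/(d:ℝ))⌋ = n / (d:ℤ) := by
  rw [show ((n:ℝ)/(d:ℝ)) = ((n/d : ℚ):ℝ) by push_cast; ring, Rat.floor_cast,
    Rat.floor_intCast_div_natCast]

lemma saw_eq (k : ℕ) (j : ℕ) :
    sawtooth ((k:ℝ)/2^j) = (k:ℝ)/2^j + (((2^j - 2*(k:ℤ)) / 2^(j+1) : ℤ) : ℝ) := by
  unfold sawtooth
  congr 2
  have h : (1:ℝ)/2 - (k:ℝ)/2^j = ((2^j - 2*(k:ℤ) : ℤ) : ℝ) / ((2^(j+1) : ℕ) : ℝ) := by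
    have h2 : (2:ℝ)^j ≠ 0 := by positivity
    have h3 : (2:ℝ)^(j+1) ≠ 0 := by positivity
    push_cast
    rw [div_sub_div _ _ two_ne_zero h2, div_eq_div_iff (by positivity) h3]
    ring
  rw [h, floor_real_int_div_nat]
  norm_num

lemma ediv_mul_two (a b : ℤ) (hb : 0 < b) : a / (b*2) = a / b / 2 := by
  have hqs : b*2*(a/(b*2)) + a % (b*2) = a := Int.mul_ediv_add_emod a (b*2)
  have hs0 : 0 ≤ a % (b*2) := Int.emod_nonneg a (by positivity)
  have hs1 : a % (b*2) < b*2 := Int.emod_lt_of_pos a (by positivity)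
  set q := a / (b*2)
  set s := a % (b*2)
  have h1 : a / b = s / b + 2*q := by
    rw [show a = s + (2*q)*b by linarith, Int.add_mul_ediv_right _ _ hb.ne']
  have h2 : 0 ≤ s / b := Int.ediv_nonneg hs0 hb.le
  have h3 : s / b < 2 := Int.ediv_lt_of_lt_mul hb (by linarith)
  omega

-- b j = c j - c (j+1) where c j = (-2k)/2^j
lemma bcc (k : ℤ) (j : ℕ) :
    (2^j - 2*k) / 2^(j+1) = (-(2*k))/2^j - (-(2*k))/2^(j+1) := by
  have hp : (0:ℤ) < 2^j := by positivity
  have h1 : (2^(j+1) : ℤ) = 2^j * 2 := by ring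
  rw [h1, ediv_mul_two _ _ hp, ediv_mul_two _ _ hp,
    show (2^j - 2*k : ℤ) = (-(2*k)) + 1*2^j by ring,
    Int.add_mul_ediv_right _ _ hp.ne']
  omega

lemma ediv_neg_one {a b : ℤ} (hb : 0 < b) (h1 : -b ≤ a) (h2 : a < 0) : a / b = -1 := by
  rw [show a = (a+b) + (-1)*b by ring, Int.add_mul_ediv_right _ _ hb.ne',
    Int.ediv_eq_zero_of_lt (by omega) (by omega)]
  omega

lemma sumA (k : ℕ) (r : ℕ) :
    ∑ j ∈ Finset.Icc 1 r, (k:ℝ)/2^j = (k:ℝ) - (k:ℝ)/2^r := by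
  induction r with
  | zero => simp
  | succ n ih =>
    rw [Finset.sum_Icc_succ_top (by omega), ih]
    have h2 : (2:ℝ)^n ≠ 0 := by positivity
    field_simp
    ring

lemma sumB (k : ℤ) (r : ℕ) :
    ∑ j ∈ Finset.Icc 1 r, ((2^j - 2*k) / 2^(j+1) : ℤ)
      = -k - (-(2*k))/2^(r+1) := by
  induction r with
  | zero => simp; omega
  | succ n ih =>
    rw [Finset.sum_Icc_succ_top (by omega), ih, bcc]
    omega

theorem stmt_5 (r : ℕ) (m : ℕ) (hm : m = 2^r) (k : ℕ) (hk1 : 1 ≤ k) (hkm : k ≤ m) :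
    ∑ j ∈ Finset.Icc 1 r, sawtooth ((k : ℝ) / 2^j) + 2 * sawtooth ((k : ℝ) / 2^(r+1)) = 1 := by
  subst hm
  have hk2 : (k:ℤ) ≤ 2^r := by exact_mod_cast hkm
  have hk3 : (1:ℤ) ≤ (k:ℤ) := by exact_mod_cast hk1
  have hc1 : (-(2*(k:ℤ)))/2^(r+1) = -1 := by
    apply ediv_neg_one (by positivity)
    · have : (2:ℤ)^(r+1) = 2 * 2^r := by ring
      omega
    · omega
  have hc2 : (-(2*(k:ℤ)))/2^(r+2) = -1 := by
    apply ediv_neg_one (by positivity)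
    · have h : (2:ℤ)^(r+2) = 2 * 2 * 2^r := by ring
      omega
    · omega
  have hsum : ∑ j ∈ Finset.Icc 1 r, sawtooth ((k : ℝ) / 2^j)
      = (∑ j ∈ Finset.Icc 1 r, (k:ℝ)/2^j)
        + ((∑ j ∈ Finset.Icc 1 r, ((2^j - 2*(k:ℤ)) / 2^(j+1) : ℤ) : ℤ) : ℝ) := by
    push_cast
    rw [← Finset.sum_add_distrib]
    exact Finset.sum_congr rfl fun j _ => saw_eq k j
  rw [hsum, sumA, sumB, saw_eq k (r+1), bcc, hc1, hc2]
  have h2 : (2:ℝ)^r ≠ 0 := by positivity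
  have h3 : (2:ℝ)^(r+1) ≠ 0 := by positivity
  push_cast
  field_simp
  ring
end

section
/- Let r be a natural number and m = 2^r. There is a probability measure μ on ℝ (namely the measure with mass 1/(r+2) at each of 1/2, 1/4, ..., 1/2^r and mass 2/(r+2) at 1/2^{r+1}) such that E_μ[g(kx)] = 1/(r+2) for all integers 1 ≤ k ≤ m. -/
open MeasureTheory

lemma sawtooth_measurable : Measurable sawtooth := by
  unfold sawtooth
  exact measurable_id.add
    ((measurable_of_countable _).comp ((measurable_const.sub measurable_id).floor))

lemma sawtooth_eq_self {x : ℝ} (h1 : 0 < x) (h2 : x ≤ 1/2) : sawtooth x = x := by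
  unfold sawtooth
  have : ⌊(1:ℝ)/2 - x⌋ = 0 := by
    rw [Int.floor_eq_zero_iff]
    constructor <;> simp at * <;> linarith
  rw [this]; simp

lemma sawtooth_eq_sub {x : ℝ} (h1 : 1/2 < x) (h2 : x ≤ 3/2) : sawtooth x = x - 1 := by
  unfold sawtooth
  have : ⌊(1:ℝ)/2 - x⌋ = -1 := by
    apply Int.floor_eq_iff.mpr
    constructor <;> push_cast <;> linarith
  rw [this]; push_cast; ring

lemma sawtooth_add_nat (x : ℝ) (n : ℕ) : sawtooth (x + n) = sawtooth x := by
  unfold sawtooth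
  have : (1:ℝ)/2 - (x + n) = ((1:ℝ)/2 - x) - n := by ring
  rw [this, Int.floor_sub_natCast]
  push_cast; ring

lemma key (r : ℕ) : ∀ k : ℕ, 1 ≤ k → k ≤ 2^r →
    (∑ j ∈ Finset.Icc 1 r, sawtooth ((k:ℝ) / 2^j)) + 2 * sawtooth ((k:ℝ) / 2^(r+1)) = 1 := by
  induction r with
  | zero =>
    intro k hk1 hk2
    interval_cases k
    have : sawtooth ((1:ℝ)/2) = 1/2 := sawtooth_eq_self (by norm_num) (by norm_num)
    simp only [Finset.Icc_self, pow_one, Nat.cast_one, zero_add]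
    norm_num [this]
  | succ r ih =>
    intro k hk1 hk2
    rw [Finset.sum_Icc_succ_top (by omega)]
    have h2r : (0:ℝ) < 2^r := by positivity
    have h2r1 : (0:ℝ) < 2^(r+1) := by positivity
    by_cases hc : k ≤ 2^r
    · have hkle : (k:ℝ) ≤ 2^r := by exact_mod_cast hc
      have hkpos : (0:ℝ) < k := by exact_mod_cast hk1
      have h1 : sawtooth ((k:ℝ) / 2^(r+1)) = (k:ℝ) / 2^(r+1) := by
        apply sawtooth_eq_self (by positivity)
        rw [div_le_iff₀ (by positivity), pow_succ]; nlinarith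
      have h2 : sawtooth ((k:ℝ) / 2^(r+1+1)) = (k:ℝ) / 2^(r+1+1) := by
        apply sawtooth_eq_self (by positivity)
        rw [div_le_iff₀ (by positivity), pow_succ, pow_succ]; nlinarith
      have e : (2:ℝ) * ((k:ℝ)/2^(r+1+1)) = (k:ℝ)/2^(r+1) := by
        rw [pow_succ]; field_simp
      have hIH := ih k hk1 hc
      rw [h1] at hIH ⊢
      rw [h2]
      linarith
    · push_neg at hc
      set k' := k - 2^r with hk'
      have hkk : k = k' + 2^r := by omega
      have hk'1 : 1 ≤ k' := by omega
      have hk'2 : k' ≤ 2^r := by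
        have : k ≤ 2^(r+1) := hk2
        rw [pow_succ] at this; omega
      have hkr : (k:ℝ) = k' + 2^r := by rw [hkk]; push_cast; ring
      have hsum : ∑ j ∈ Finset.Icc 1 r, sawtooth ((k:ℝ) / 2^j)
          = ∑ j ∈ Finset.Icc 1 r, sawtooth ((k':ℝ) / 2^j) := by
        apply Finset.sum_congr rfl
        intro j hj
        simp only [Finset.mem_Icc] at hj
        have h2pow : (2:ℝ)^r = 2^j * 2^(r-j) := by
          rw [← pow_add]; congr 1; omega
        have h2j : (0:ℝ) < 2^j := by positivity
        have : (k:ℝ) / 2^j = (k':ℝ)/2^j + ((2^(r-j):ℕ):ℝ) := by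
          rw [hkr, h2pow]; push_cast; field_simp
        rw [this, sawtooth_add_nat]
      have hk'r : (0:ℝ) < k' := by exact_mod_cast hk'1
      have hk'le : (k':ℝ) ≤ 2^r := by exact_mod_cast hk'2
      have hkub : (k:ℝ) ≤ 2^(r+1) := by exact_mod_cast hk2
      have hklb : (2:ℝ)^r < k := by exact_mod_cast hc
      have h1 : sawtooth ((k:ℝ) / 2^(r+1)) = (k:ℝ)/2^(r+1) - 1 := by
        apply sawtooth_eq_sub
        · rw [lt_div_iff₀ (by positivity), pow_succ]; nlinarith
        · rw [div_le_iff₀ (by positivity), pow_succ]; nlinarith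
      have h2 : sawtooth ((k:ℝ) / 2^(r+1+1)) = (k:ℝ)/2^(r+1+1) := by
        apply sawtooth_eq_self (by positivity)
        rw [div_le_iff₀ (by positivity), pow_succ, pow_succ]; nlinarith
      have h3 : sawtooth ((k':ℝ) / 2^(r+1)) = (k':ℝ)/2^(r+1) := by
        apply sawtooth_eq_self (by positivity)
        rw [div_le_iff₀ (by positivity), pow_succ]; nlinarith
      have e : (2:ℝ) * ((k:ℝ)/2^(r+1+1)) = (k:ℝ)/2^(r+1) := by
        rw [pow_succ]; field_simp
      have e2 : 2*((k:ℝ)/2^(r+1)) - 2*((k':ℝ)/2^(r+1)) = 1 := by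
        rw [hkr, pow_succ]; field_simp; ring
      have hIH := ih k' hk'1 hk'2
      rw [h3] at hIH
      rw [hsum, h1, h2]
      linarith

lemma integrable_smul_dirac {f : ℝ → ℝ} (hf : Measurable f) (c : ENNReal) (hc : c ≠ ⊤) (a : ℝ) :
    Integrable f (c • Measure.dirac a) := by
  refine Integrable.smul_measure ⟨hf.aestronglyMeasurable, ?_⟩ hc
  simp [HasFiniteIntegral, lintegral_dirac]

theorem stmt_6 (r : ℕ) (m : ℕ) (hm : m = 2^r)
    (μ : Measure ℝ)
    (hμ : μ = (∑ j ∈ Finset.Icc 1 r,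
        (ENNReal.ofReal (1 / (r + 2))) • Measure.dirac ((1:ℝ) / 2^j))
      + (ENNReal.ofReal (2 / (r + 2))) • Measure.dirac ((1:ℝ) / 2^(r+1))) :
    IsProbabilityMeasure μ ∧
      ∀ k : ℕ, 1 ≤ k → k ≤ m → (∫ x, sawtooth (k * x) ∂μ) = 1 / (r + 2) := by
  have hr2 : (0:ℝ) < (r:ℝ) + 2 := by positivity
  have h1nn : (0:ℝ) ≤ 1 / ((r:ℝ) + 2) := by positivity
  have h2nn : (0:ℝ) ≤ 2 / ((r:ℝ) + 2) := by positivity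
  constructor
  · constructor
    rw [hμ]
    simp only [Measure.coe_add, Pi.add_apply, Measure.coe_finset_sum, Finset.sum_apply,
      Measure.coe_smul, Pi.smul_apply, Measure.dirac_apply_of_mem (Set.mem_univ _),
      smul_eq_mul, mul_one, Finset.sum_const, Nat.card_Icc]
    rw [show r + 1 - 1 = r by omega]
    rw [nsmul_eq_mul]
    rw [show ((r:ENNReal)) = ENNReal.ofReal (r:ℝ) by simp]
    rw [← ENNReal.ofReal_mul (by positivity), ← ENNReal.ofReal_add (by positivity) h2nn]
    rw [show (r:ℝ) * (1 / ((r:ℝ)+2)) + 2 / ((r:ℝ)+2) = 1 by field_simp]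
    exact ENNReal.ofReal_one
  · intro k hk1 hk2
    set f : ℝ → ℝ := fun x => sawtooth ((k:ℝ) * x) with hf
    have hmeas : Measurable f := sawtooth_measurable.comp (measurable_id.const_mul _)
    have hint : ∀ (c : ℝ) (a : ℝ), Integrable f (ENNReal.ofReal c • Measure.dirac a) :=
      fun c a => integrable_smul_dirac hmeas _ ENNReal.ofReal_ne_top a
    rw [hμ, integral_add_measure
        (integrable_finset_sum_measure.mpr fun j _ => hint _ _) (hint _ _),
      integral_finset_sum_measure (fun j _ => hint _ _)]
    simp only [integral_smul_measure, integral_dirac,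
      ENNReal.toReal_ofReal h1nn, ENNReal.toReal_ofReal h2nn, smul_eq_mul]
    have hterm : ∀ j : ℕ, f ((1:ℝ) / 2^j) = sawtooth ((k:ℝ) / 2^j) := by
      intro j; rw [hf]; simp only []; congr 1; ring
    simp only [hterm]
    have hkey := key r k hk1 (hm ▸ hk2)
    have : ∑ j ∈ Finset.Icc 1 r, 1 / ((r:ℝ) + 2) * sawtooth ((k:ℝ) / 2^j)
        = 1 / ((r:ℝ) + 2) * ∑ j ∈ Finset.Icc 1 r, sawtooth ((k:ℝ) / 2^j) := by
      rw [Finset.mul_sum]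
    rw [this]
    have h2e : 2 / ((r:ℝ) + 2) * sawtooth ((k:ℝ) / 2^(r+1))
        = 1 / ((r:ℝ) + 2) * (2 * sawtooth ((k:ℝ) / 2^(r+1))) := by ring
    rw [h2e, ← mul_add, hkey, mul_one]
end

section
/- Let r, m be natural numbers with 2^r < m ≤ 2^{r+1}. For every integer k with 1 ≤ k ≤ m, ∑_{j=1}^{r+1} g(k/2^j) + (m/2^r) · g(k/(2m)) = 1. -/
lemma floor_int_div_real (a : ℤ) (d : ℕ) : ⌊((a:ℝ))/(d:ℝ)⌋ = a / (d:ℤ) := by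
  rw [show ((a:ℝ)/(d:ℝ)) = ((a/d : ℚ) : ℝ) by push_cast; ring, Rat.floor_cast,
    Rat.floor_intCast_div_natCast]

lemma geom_half (n : ℕ) : ∑ j ∈ Finset.Icc 1 n, (1:ℝ)/2^j = 1 - 1/2^n := by
  induction n with
  | zero => simp
  | succ n ih =>
    rw [Finset.sum_Icc_succ_top (by omega), ih, pow_succ]
    ring

lemma ediv_step (a p : ℤ) (hp : 0 < p) : (p + a) / (2*p) = a / p - a / (2*p) := by
  have hp0 : p ≠ 0 := hp.ne'
  have h2p : (2*p) ≠ 0 := by positivity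
  set q := a / (2*p) with hq
  set s := a % (2*p) with hs
  have hsa : 2*p*q + s = a := Int.mul_ediv_add_emod a (2*p)
  have hs0 : 0 ≤ s := Int.emod_nonneg a h2p
  have hs1 : s < 2*p := Int.emod_lt_of_pos a (by positivity)
  rcases lt_or_ge s p with hsp | hsp
  · have hap : a / p = 2*q := by
      rw [show a = s + p * (2*q) by rw [← hsa]; ring, Int.add_mul_ediv_left _ _ hp0,
        Int.ediv_eq_zero_of_lt hs0 hsp]
      ring
    have hpa : (p + a) / (2*p) = q := by
      rw [show p + a = (p + s) + (2*p) * q by rw [← hsa]; ring, Int.add_mul_ediv_left _ _ h2p,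
        Int.ediv_eq_zero_of_lt (by omega) (by omega)]
      ring
    rw [hpa, hap]; ring
  · have hap : a / p = 2*q + 1 := by
      rw [show a = ((s - p) + p * 1) + p * (2*q) by rw [← hsa]; ring, Int.add_mul_ediv_left _ _ hp0,
        Int.add_mul_ediv_left _ _ hp0, Int.ediv_eq_zero_of_lt (by omega) (by omega)]
      ring
    have hpa : (p + a) / (2*p) = q + 1 := by
      rw [show p + a = ((s - p) + (2*p) * 1) + (2*p) * q by rw [← hsa]; ring,
        Int.add_mul_ediv_left _ _ h2p, Int.add_mul_ediv_left _ _ h2p,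
        Int.ediv_eq_zero_of_lt (by omega) (by omega)]
      ring
    rw [hpa, hap]; ring

lemma saw_val (k : ℕ) (i : ℕ) :
    sawtooth ((k:ℝ)/2^(i+1)) = (k:ℝ) * ((1:ℝ)/2^(i+1))
      + (((-(k:ℤ)) / 2^i - (-(k:ℤ)) / 2^(i+1) : ℤ) : ℝ) := by
  unfold sawtooth
  have h : (1:ℝ)/2 - (k:ℝ)/2^(i+1) = ((2^i - (k:ℤ) : ℤ):ℝ) / ((2^(i+1) : ℕ) : ℝ) := by
    push_cast
    rw [pow_succ]
    have : (0:ℝ) < 2^i := by positivity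
    field_simp
  rw [h, floor_int_div_real]
  have : (2^i - (k:ℤ)) / ((2^(i+1) : ℕ) : ℤ) = (-(k:ℤ)) / 2^i - (-(k:ℤ)) / 2^(i+1) := by
    have := ediv_step (-(k:ℤ)) (2^i) (by positivity)
    push_cast
    rw [show (2:ℤ)^(i+1) = 2 * 2^i by ring, show (2^i - (k:ℤ)) = 2^i + (-(k:ℤ)) by ring]
    exact this
  rw [this]
  ring

lemma tele (f : ℕ → ℤ) (n : ℕ) :
    ∑ j ∈ Finset.Icc 1 n, (f (j-1) - f j) = f 0 - f n := by
  induction n with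
  | zero => simp
  | succ n ih =>
    rw [Finset.sum_Icc_succ_top (by omega), ih]
    simp only [Nat.add_sub_cancel]
    ring

theorem stmt_9 (r m : ℕ) (h1 : 2^r < m) (h2 : m ≤ 2^(r+1))
    (k : ℕ) (hk1 : 1 ≤ k) (hkm : k ≤ m) :
    ∑ j ∈ Finset.Icc 1 (r+1), sawtooth ((k : ℝ) / 2^j)
      + (m : ℝ) / 2^r * sawtooth ((k : ℝ) / (2 * m)) = 1 := by
  have hm0 : 0 < m := by omega
  have hm : (0:ℝ) < m := by exact_mod_cast hm0
  have hk : (0:ℝ) < k := by exact_mod_cast hk1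
  have hkm' : (k:ℝ) ≤ m := by exact_mod_cast hkm
  have hsaw2 : sawtooth ((k:ℝ)/(2*m)) = (k:ℝ)/(2*m) := by
    unfold sawtooth
    have h0 : (0:ℝ) < (k:ℝ)/(2*m) := by positivity
    have h1' : (k:ℝ)/(2*m) ≤ 1/2 := by
      rw [div_le_div_iff₀ (by positivity) (by norm_num)]
      nlinarith
    have hfl : ⌊(1:ℝ)/2 - (k:ℝ)/(2*m)⌋ = 0 := by
      rw [Int.floor_eq_zero_iff]
      constructor <;> simp <;> linarith
    rw [hfl]; simp
  have hsum : ∑ j ∈ Finset.Icc 1 (r+1), sawtooth ((k : ℝ) / 2^j)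
      = (k:ℝ) * (1 - 1/2^(r+1)) + (1 - k) := by
    have hrw : ∀ j ∈ Finset.Icc 1 (r+1), sawtooth ((k:ℝ)/2^j)
        = (k:ℝ) * ((1:ℝ)/2^j)
          + (((-(k:ℤ)) / 2^(j-1) - (-(k:ℤ)) / 2^j : ℤ) : ℝ) := by
      intro j hj
      simp only [Finset.mem_Icc] at hj
      obtain ⟨i, rfl⟩ : ∃ i, j = i + 1 := ⟨j - 1, by omega⟩
      simpa using saw_val k i
    rw [Finset.sum_congr rfl hrw, Finset.sum_add_distrib, ← Finset.mul_sum, geom_half]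
    congr 1
    rw [← Int.cast_sum, tele (fun i => (-(k:ℤ)) / 2^i) (r+1)]
    have hlast : (-(k:ℤ)) / 2^(r+1) = -1 := by
      have hk2 : (k:ℤ) ≤ 2^(r+1) := by exact_mod_cast hkm.trans h2
      have hk0 : (1:ℤ) ≤ k := by exact_mod_cast hk1
      rw [show (-(k:ℤ)) = (2^(r+1) - k) + (2^(r+1)) * (-1) by ring,
        Int.add_mul_ediv_left _ _ (by positivity),
        Int.ediv_eq_zero_of_lt (by omega) (by omega)]
      ring
    rw [hlast, pow_zero, Int.ediv_one]
    push_cast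
    ring
  rw [hsum, hsaw2]
  have h2r : (0:ℝ) ≠ 2^(r+1) := by positivity
  field_simp
  ring
end

section
/- Let m be a positive integer and ζ = e^{2πi/(2m+2)}. Define σ_m : ℤ/(2m+2) → ℤ by σ_m(k) = 1 for 1 ≤ k ≤ m, σ_m(k) = -1 for -m ≤ k ≤ -1, and σ_m(k) = 0 otherwise. Then the discrete Fourier transform σ̂_m(j) := (1/(2m+2)) ∑_{k=0}^{2m+1} σ_m(k) ζ^{-jk} equals (-i/(m+1)) · cot(πj/(2m+2)) for odd j and 0 for even j. -/
open Complex Real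

theorem stmt_12 (m : ℕ) (hm : 1 ≤ m)
    (ζ : ℂ) (hζ : ζ = Complex.exp (2 * π * Complex.I / (2 * m + 2)))
    (σ : ℤ → ℤ)
    (hσ : ∀ k : ℤ, 0 ≤ k → k ≤ 2 * m + 1 →
      σ k = if 1 ≤ k ∧ k ≤ m then 1 else if m + 2 ≤ k ∧ k ≤ 2 * m + 1 then -1 else 0)
    (j : ℤ) :
    (1 / (2 * (m : ℂ) + 2)) * ∑ k ∈ Finset.range (2 * m + 2), (σ k : ℂ) * ζ ^ (-(j * k)) =
      if Odd j then (-Complex.I / (m + 1)) * Real.cot (π * j / (2 * m + 2)) else 0 := by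
  have hNne : (2 * (m : ℂ) + 2) ≠ 0 := by
    intro h
    have : (2 * (m : ℝ) + 2) = 0 := by exact_mod_cast congrArg Complex.re h
    nlinarith [Nat.cast_nonneg (α := ℝ) m]
  set c : ℂ := 2 * π * Complex.I / (2 * m + 2) with hc
  set w : ℂ := Complex.exp (-(j : ℂ) * c) with hwdef
  -- w^(m+1) = (-1)^j
  have hwm1 : w ^ (m + 1) = (-1 : ℂ) ^ j := by
    rw [hwdef, ← Complex.exp_nat_mul]
    have harg : ((m : ℂ) + 1) * (-(j : ℂ) * c) = (-j : ℤ) * (π * Complex.I) := by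
      rw [hc]
      field_simp
      push_cast; ring
    push_cast
    rw [harg, Complex.exp_int_mul, Complex.exp_pi_mul_I, zpow_neg]
    rcases Int.even_or_odd j with he | ho
    · rw [he.neg_one_zpow]; norm_num
    · rw [ho.neg_one_zpow]; norm_num
  -- rewrite summand
  have hterm : ∀ k ∈ Finset.range (2 * m + 2),
      (σ k : ℂ) * ζ ^ (-(j * k)) =
      (if 1 ≤ k ∧ k ≤ m then 1 else if m + 2 ≤ k ∧ k ≤ 2 * m + 1 then (-1 : ℂ) else 0) * w ^ k := by
    intro k hk
    rw [Finset.mem_range] at hk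
    have hζw : ζ ^ (-(j * (k : ℤ))) = w ^ k := by
      rw [hζ, ← Complex.exp_int_mul, hwdef, ← Complex.exp_nat_mul]
      congr 1
      push_cast
      ring
    rw [hζw, hσ k (by positivity) (by omega)]
    congr 1
    by_cases h1 : 1 ≤ k ∧ k ≤ m
    · rw [if_pos (by omega : 1 ≤ (k : ℤ) ∧ (k : ℤ) ≤ (m : ℤ)), if_pos h1]
      norm_num
    · rw [if_neg (by omega : ¬(1 ≤ (k : ℤ) ∧ (k : ℤ) ≤ (m : ℤ))), if_neg h1]
      by_cases h2 : m + 2 ≤ k ∧ k ≤ 2 * m + 1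
      · rw [if_pos (by omega : (m : ℤ) + 2 ≤ (k : ℤ) ∧ (k : ℤ) ≤ 2 * (m : ℤ) + 1), if_pos h2]
        norm_num
      · rw [if_neg (by omega : ¬((m : ℤ) + 2 ≤ (k : ℤ) ∧ (k : ℤ) ≤ 2 * (m : ℤ) + 1)), if_neg h2]
        norm_num
  rw [Finset.sum_congr rfl hterm]
  set g : ℕ → ℂ := fun k =>
    (if 1 ≤ k ∧ k ≤ m then 1 else if m + 2 ≤ k ∧ k ≤ 2 * m + 1 then (-1 : ℂ) else 0) * w ^ k
    with hg
  set T : ℂ := ∑ i ∈ Finset.range m, w ^ (1 + i) with hT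
  have hsum : ∑ k ∈ Finset.range (2 * m + 2), g k = (1 - w ^ (m + 1)) * T := by
    have h0 : ∑ k ∈ Finset.range (2 * m + 2), g k =
        ∑ k ∈ Finset.Ico 0 (m + 1), g k + ∑ k ∈ Finset.Ico (m + 1) (2 * m + 2), g k := by
      rw [Finset.sum_Ico_consecutive g (by omega) (by omega), Finset.range_eq_Ico]
    have h1 : ∑ k ∈ Finset.Ico 0 (m + 1), g k =
        ∑ k ∈ Finset.Ico 1 (m + 1), g k := by
      rw [← Finset.sum_Ico_consecutive g (by omega : 0 ≤ 1) (by omega)]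
      have : ∑ k ∈ Finset.Ico 0 1, g k = 0 := by
        rw [Finset.sum_Ico_eq_sum_range]
        simp [hg]
      rw [this, zero_add]
    have h2 : ∑ k ∈ Finset.Ico (m + 1) (2 * m + 2), g k =
        ∑ k ∈ Finset.Ico (m + 2) (2 * m + 2), g k := by
      rw [← Finset.sum_Ico_consecutive g (by omega : m + 1 ≤ m + 2) (by omega)]
      have : ∑ k ∈ Finset.Ico (m + 1) (m + 2), g k = 0 := by
        rw [Finset.sum_Ico_eq_sum_range]
        simp only [Nat.add_sub_cancel_left, show m + 2 - (m + 1) = 1 from by omega]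
        rw [Finset.sum_range_one, hg]
        have : ¬(1 ≤ m + 1 + 0 ∧ m + 1 + 0 ≤ m) := by omega
        have h2' : ¬(m + 2 ≤ m + 1 + 0 ∧ m + 1 + 0 ≤ 2 * m + 1) := by omega
        simp [this, h2']
      rw [this, zero_add]
    have h3 : ∑ k ∈ Finset.Ico 1 (m + 1), g k = T := by
      rw [Finset.sum_Ico_eq_sum_range, hT]
      apply Finset.sum_congr (by congr 1 <;> omega)
      intro i hi
      rw [Finset.mem_range] at hi
      rw [hg]
      have : 1 ≤ 1 + i ∧ 1 + i ≤ m := by omega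
      simp [this]
    have h4 : ∑ k ∈ Finset.Ico (m + 2) (2 * m + 2), g k = -(w ^ (m + 1) * T) := by
      rw [Finset.sum_Ico_eq_sum_range, hT, Finset.mul_sum, ← Finset.sum_neg_distrib]
      apply Finset.sum_congr (by congr 1 <;> omega)
      intro i hi
      rw [Finset.mem_range] at hi
      rw [hg]
      have hc1 : ¬(1 ≤ m + 2 + i ∧ m + 2 + i ≤ m) := by omega
      have hc2 : m + 2 ≤ m + 2 + i ∧ m + 2 + i ≤ 2 * m + 1 := by omega
      simp only [hc1, hc2, if_false, if_true, and_self]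
      rw [show m + 2 + i = (m + 1) + (1 + i) from by omega, pow_add]
      ring
    rw [h0, h1, h2, h3, h4]
    ring
  rw [hsum, hwm1]
  rcases Int.even_or_odd j with he | ho
  · rw [if_neg (by simpa using he), he.neg_one_zpow]
    ring
  · rw [if_pos ho, ho.neg_one_zpow]
    -- now the odd case
    set u : ℂ := Complex.exp (-(j : ℂ) * π * Complex.I / (2 * m + 2)) with hu
    have hune : u ≠ 0 := Complex.exp_ne_zero _
    have hwu : w = u ^ 2 := by
      rw [hwdef, hu, ← Complex.exp_nat_mul, hc]
      congr 1
      push_cast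
      ring
    have hwne1 : w ≠ 1 := by
      intro h
      have h' := hwm1
      rw [h, one_pow, ho.neg_one_zpow] at h'
      norm_num at h'
    have hu2ne1 : u ^ 2 ≠ 1 := by rw [← hwu]; exact hwne1
    have hTval : T = (w ^ (m + 1) - w) / (w - 1) := by
      rw [hT]
      have : ∀ i ∈ Finset.range m, w ^ (1 + i) = w * w ^ i := by
        intro i _; rw [pow_add, pow_one]
      rw [Finset.sum_congr rfl this, ← Finset.mul_sum, geom_sum_eq hwne1,
        pow_succ']
      ring
    rw [hTval, hwm1, ho.neg_one_zpow]
    -- handle the cot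
    set θ : ℝ := π * j / (2 * m + 2) with hθ
    have hθc : (θ : ℂ) = (π : ℂ) * (j : ℂ) / (2 * m + 2) := by
      rw [hθ]; push_cast; ring
    have hexpneg : Complex.exp (-(θ : ℂ) * Complex.I) = u := by
      rw [hu, hθc]
      congr 1
      ring
    have hexppos : Complex.exp ((θ : ℂ) * Complex.I) = u⁻¹ := by
      rw [← hexpneg, ← Complex.exp_neg]
      congr 1
      ring
    have hcos : (Real.cos θ : ℂ) = (u⁻¹ + u) / 2 := by
      rw [Complex.ofReal_cos]
      show (Complex.exp ((θ : ℂ) * Complex.I) + Complex.exp (-(θ : ℂ) * Complex.I)) / 2 = _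
      rw [hexppos, hexpneg]
    have hsin : (Real.sin θ : ℂ) = (u - u⁻¹) * Complex.I / 2 := by
      rw [Complex.ofReal_sin]
      show (Complex.exp (-(θ : ℂ) * Complex.I) - Complex.exp ((θ : ℂ) * Complex.I)) * Complex.I / 2 = _
      rw [hexppos, hexpneg]
    have hcot : (Real.cot θ : ℂ) = (Real.cos θ : ℂ) / (Real.sin θ : ℂ) := by
      rw [Real.cot_eq_cos_div_sin]; push_cast; ring
    rw [hcot, hcos, hsin, hwu]
    have hm1ne : ((m : ℂ) + 1) ≠ 0 := by
      intro h
      have : ((m : ℝ) + 1) = 0 := by exact_mod_cast congrArg Complex.re h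
      nlinarith [Nat.cast_nonneg (α := ℝ) m]
    have hu2sub : u ^ 2 - 1 ≠ 0 := sub_ne_zero.mpr hu2ne1
    have huinv : u - u⁻¹ ≠ 0 := by
      intro h
      apply hu2sub
      have h' := sub_eq_zero.mp h
      rw [sub_eq_zero, sq]
      nth_rewrite 2 [h']
      exact mul_inv_cancel₀ hune
    have hq : ((u⁻¹ + u) / 2) / ((u - u⁻¹) * Complex.I / 2) =
        (1 + u ^ 2) / ((u ^ 2 - 1) * Complex.I) := by
      have hB : (u - u⁻¹) * Complex.I / 2 ≠ 0 :=
        div_ne_zero (mul_ne_zero huinv Complex.I_ne_zero) two_ne_zero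
      rw [div_eq_div_iff hB (mul_ne_zero hu2sub Complex.I_ne_zero)]
      field_simp
    rw [hq]
    field_simp [hu2sub, hNne, hm1ne, Complex.I_ne_zero]
    ring
end

section
/- Let m be a positive integer. For every real number x, ∑_{1 ≤ k ≤ m, k odd} (2/(m+1)²) · cot(πk/(2m+2)) · [ (m+1-k)·sin(kx) + k·sin((m+1-k)x) ] ≤ 1. -/
open Real Finset

noncomputable def EE (n : ℕ) (y : ℝ) : ℂ := ∑ p ∈ range n, Complex.exp ((p * y : ℝ) * Complex.I)
noncomputable def GG (n : ℕ) (y : ℝ) : ℝ := Complex.normSq (EE n y)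

lemma GG_nonneg (n : ℕ) (y : ℝ) : 0 ≤ GG n y := Complex.normSq_nonneg _

lemma GG_eq (n : ℕ) (y : ℝ) :
    GG n y = ∑ p ∈ range n, ∑ q ∈ range n, Real.cos (((p:ℝ) - (q:ℝ)) * y) := by
  have h1 : (GG n y : ℂ) = EE n y * (starRingEnd ℂ) (EE n y) := (Complex.mul_conj _).symm
  have h2 : EE n y * (starRingEnd ℂ) (EE n y)
      = ∑ p ∈ range n, ∑ q ∈ range n, Complex.exp ((((p:ℝ) - (q:ℝ)) * y : ℝ) * Complex.I) := by
    unfold EE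
    rw [map_sum, Finset.sum_mul_sum]
    refine Finset.sum_congr rfl fun p _ => Finset.sum_congr rfl fun q _ => ?_
    rw [← Complex.exp_conj, ← Complex.exp_add]
    congr 1
    simp [Complex.conj_ofReal]
    push_cast
    ring
  have h3 : GG n y = (EE n y * (starRingEnd ℂ) (EE n y)).re := by
    rw [← h1]; simp
  rw [h3, h2]
  rw [Complex.re_sum]
  refine Finset.sum_congr rfl fun p _ => ?_
  rw [Complex.re_sum]
  refine Finset.sum_congr rfl fun q _ => ?_
  exact Complex.exp_ofReal_mul_I_re _

lemma exp_sample (n : ℕ) (hn : 0 < n) (D : ℝ) (hD : ∃ k : ℤ, (D = k ∧ k ≠ 0 ∧ k.natAbs < n)) (c : ℝ) :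
    ∑ l ∈ range n, Complex.exp ((D * (c - (2*l+1)*π/n) : ℝ) * Complex.I) = 0 := by
  obtain ⟨k, rfl, hk0, hklt⟩ := hD
  have hnR : (n : ℝ) ≠ 0 := Nat.cast_ne_zero.mpr hn.ne'
  have hnC : (n : ℂ) ≠ 0 := Nat.cast_ne_zero.mpr hn.ne'
  set ζ : ℂ := Complex.exp ((-(2*π*k/n) : ℝ) * Complex.I) with hζ
  have hterm : ∀ l ∈ range n,
      Complex.exp (((k:ℝ) * (c - (2*l+1)*π/n) : ℝ) * Complex.I)
        = Complex.exp (((k:ℝ) * (c - π/n) : ℝ) * Complex.I) * ζ ^ l := by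
    intro l _
    rw [hζ, ← Complex.exp_nat_mul, ← Complex.exp_add]
    congr 1
    push_cast
    field_simp
    ring
  rw [Finset.sum_congr rfl hterm, ← Finset.mul_sum]
  have hζ1 : ζ ≠ 1 := by
    rw [hζ]
    intro h
    rw [Complex.exp_eq_one_iff] at h
    obtain ⟨t, ht⟩ := h
    have hre : -(2*π*(k:ℝ)/n) = (t:ℝ) * (2*π) := by
      have := congrArg Complex.im ht
      simpa using this
    have hπ : (0:ℝ) < π := Real.pi_pos
    have hcast : (k : ℝ) = ((-t * n : ℤ) : ℝ) := by
      push_cast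
      field_simp at hre
      nlinarith [hre]
    have hZ : k = -t * n := by exact_mod_cast hcast
    rcases eq_or_ne t 0 with rfl | ht0
    · simp at hZ; exact hk0 hZ
    · have h1 : k.natAbs = t.natAbs * n := by rw [hZ]; simp [Int.natAbs_mul]
      have h2 : 1 ≤ t.natAbs := Int.natAbs_pos.mpr ht0
      nlinarith [h1, h2, hklt]
  have hζn : ζ ^ n = 1 := by
    rw [hζ, ← Complex.exp_nat_mul]
    have : (n : ℂ) * (((-(2*π*k/n) : ℝ)) * Complex.I) = (-k : ℤ) * (2 * π * Complex.I) := by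
      push_cast
      field_simp
    rw [this, Complex.exp_int_mul_two_pi_mul_I]
  rw [geom_sum_eq hζ1, hζn]
  simp

lemma sampling (n : ℕ) (hn : 0 < n) (x : ℝ) :
    ∑ l ∈ range n, GG n (x - (2*l+1)*π/n) = (n:ℝ)^2 := by
  simp_rw [GG_eq]
  rw [Finset.sum_comm]
  have step : ∀ p ∈ range n, ∑ l ∈ range n, ∑ q ∈ range n,
      Real.cos (((p:ℝ) - (q:ℝ)) * (x - (2*l+1)*π/n))
      = ∑ q ∈ range n, ∑ l ∈ range n, Real.cos (((p:ℝ) - (q:ℝ)) * (x - (2*l+1)*π/n)) :=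
    fun p _ => Finset.sum_comm
  rw [Finset.sum_congr rfl step]
  have inner : ∀ p ∈ range n, ∀ q ∈ range n,
      ∑ l ∈ range n, Real.cos (((p:ℝ) - (q:ℝ)) * (x - (2*l+1)*π/n))
        = if q = p then (n:ℝ) else 0 := by
    intro p hp q hq
    rcases eq_or_ne q p with rfl | hne
    · simp
    · rw [if_neg hne]
      have hsum := exp_sample n hn ((p:ℝ) - (q:ℝ))
        ⟨(p:ℤ) - q, by push_cast; ring, by
          simp only [ne_eq, sub_eq_zero]
          exact_mod_cast fun h => hne (by exact_mod_cast h.symm),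
          by
          rw [Finset.mem_range] at hp hq
          omega⟩ x
      have := congrArg Complex.re hsum
      rw [Complex.re_sum] at this
      simp only [Complex.zero_re] at this
      rw [← this]
      refine Finset.sum_congr rfl fun l _ => ?_
      exact (Complex.exp_ofReal_mul_I_re _).symm
  rw [Finset.sum_congr rfl (fun p hp => Finset.sum_congr rfl (fun q hq => inner p hp q hq))]
  simp [Finset.sum_ite_eq]
  rw [Finset.sum_congr rfl (fun p hp => if_pos (Finset.mem_range.mp hp))]
  rw [Finset.sum_const, nsmul_eq_mul]
  rw [Finset.card_range]; ring

lemma double_sum (g : ℕ → ℝ) (hg0 : g 0 = 0) (h : ℕ → ℕ → ℝ)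
    (hsym : ∀ p q, h p q = h q p) (hval : ∀ p q, q ≤ p → h p q = g (p - q)) (n : ℕ) :
    ∑ p ∈ range n, ∑ q ∈ range n, h p q = 2 * ∑ d ∈ range n, ((n : ℝ) - d) * g d := by
  induction n with
  | zero => simp
  | succ n ih =>
    rw [Finset.sum_range_succ]
    simp_rw [Finset.sum_range_succ]
    rw [Finset.sum_add_distrib, ih]
    have hdiag : h n n = 0 := by rw [hval n n le_rfl]; simpa
    have hcol : ∀ p ∈ range n, h p n = g (n - p) := fun p hp => by
      rw [hsym, hval n p (Finset.mem_range.mp hp).le]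
    have hrow : ∀ q ∈ range n, h n q = g (n - q) := fun q hq =>
      hval n q (Finset.mem_range.mp hq).le
    rw [Finset.sum_congr rfl hcol, Finset.sum_congr rfl hrow, hdiag]
    have hre : ∑ q ∈ range n, g (n - q) = ∑ d ∈ range n, g (d + 1) := by
      rw [← Finset.sum_range_reflect (fun j => g (j + 1)) n]
      refine Finset.sum_congr rfl fun q hq => ?_
      congr 1
      have := Finset.mem_range.mp hq
      omega
    have hshift : ∑ d ∈ range n, g (d + 1) = ∑ d ∈ range n, g d + g n := by
      have h1 := Finset.sum_range_succ' g n
      have h2 := Finset.sum_range_succ g n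
      rw [h2] at h1
      rw [hg0] at h1
      linarith
    rw [hre, hshift]
    have hexp : ∑ d ∈ range n, (((n+1:ℕ):ℝ) - d) * g d
        = ∑ d ∈ range n, (((n:ℝ) - d) * g d + g d) :=
      Finset.sum_congr rfl (fun d _ => by push_cast; ring)
    rw [hexp, Finset.sum_add_distrib]
    push_cast
    ring

lemma tele_s14 (φ : ℝ) (M : ℕ) :
    2 * Real.sin φ * ∑ l ∈ range M, Real.sin ((2*l+1)*φ) = 1 - Real.cos (2*M*φ) := by
  induction M with
  | zero => simp
  | succ M ih =>
    rw [Finset.sum_range_succ, mul_add, ih]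
    have key : Real.cos (2*(M:ℝ)*φ) - Real.cos (2*((M:ℝ)+1)*φ)
        = 2 * Real.sin φ * Real.sin ((2*(M:ℝ)+1)*φ) := by
      have h := Real.cos_sub_cos (2*(M:ℝ)*φ) (2*((M:ℝ)+1)*φ)
      rw [show (2*(M:ℝ)*φ + 2*((M:ℝ)+1)*φ)/2 = (2*(M:ℝ)+1)*φ by ring,
          show (2*(M:ℝ)*φ - 2*((M:ℝ)+1)*φ)/2 = -φ by ring, Real.sin_neg] at h
      linarith [h]
    push_cast
    linarith [key]

lemma aux1 (c : ℝ) (hs : Real.sin c ≠ 0) (hc : Real.cos c ≠ 0) :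
    (2 : ℝ) / Real.sin (2*c) = Real.cot c + Real.tan c := by
  rw [Real.sin_two_mul, Real.cot_eq_cos_div_sin, Real.tan_eq_sin_div_cos]
  field_simp
  linear_combination (-1) * Real.sin_sq_add_cos_sq c

lemma aux2 (c : ℝ) (hs : Real.sin c ≠ 0) (hc : Real.cos c ≠ 0) :
    (1 + Real.cos (2*c)) / Real.sin (2*c) = Real.cot c := by
  rw [Real.sin_two_mul, Real.cos_two_mul, Real.cot_eq_cos_div_sin]
  field_simp
  ring

lemma aux3 (c : ℝ) (hs : Real.sin c ≠ 0) (hc : Real.cos c ≠ 0) :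
    (1 - Real.cos (2*c)) / Real.sin (2*c) = Real.tan c := by
  rw [Real.sin_two_mul, Real.cos_two_mul, Real.tan_eq_sin_div_cos]
  field_simp
  linear_combination (-2) * Real.sin_sq_add_cos_sq c

lemma sigma_eq (m : ℕ) (hm : 1 ≤ m) (d : ℕ) (hd1 : 1 ≤ d) (hdm : d ≤ m) :
    2 * ∑ j ∈ (Finset.Icc 1 m).filter (fun j => Odd j), Real.sin ((d:ℝ) * ((j:ℝ)*π/((m:ℝ)+1)))
      = (if Odd d then Real.cot ((d:ℝ)*π/(2*((m:ℝ)+1))) else 0)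
        + (if Odd (m+1-d) then Real.tan ((d:ℝ)*π/(2*((m:ℝ)+1))) else 0) := by
  have hπ : (0:ℝ) < π := Real.pi_pos
  set N : ℝ := (m:ℝ)+1 with hN
  have hN0 : (0:ℝ) < N := by positivity
  set φ : ℝ := (d:ℝ)*π/N with hφdef
  set ψ : ℝ := (d:ℝ)*π/(2*N) with hψdef
  have hφψ : φ = 2*ψ := by rw [hφdef, hψdef]; field_simp
  have hdN : (d:ℝ) < N := by rw [hN]; push_cast; exact_mod_cast by exact_mod_cast (by omega : d < m+1)
  have hφpos : 0 < φ := by rw [hφdef]; positivity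
  have hφlt : φ < π := by
    rw [hφdef, div_lt_iff₀ hN0]
    nlinarith [hdN]
  have hsinφ : 0 < Real.sin φ := Real.sin_pos_of_pos_of_lt_pi hφpos hφlt
  have hψpos : 0 < ψ := by rw [hψdef]; positivity
  have hψlt : ψ < π/2 := by rw [hψdef]; rw [div_lt_iff₀ (by positivity : (0:ℝ) < 2*N)]; nlinarith [hdN]
  have hsinψ : 0 < Real.sin ψ := Real.sin_pos_of_pos_of_lt_pi hψpos (by linarith)
  have hcosψ : 0 < Real.cos ψ := Real.cos_pos_of_mem_Ioo ⟨by linarith, hψlt⟩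
  set M : ℕ := (m+1)/2 with hMdef
  -- reindex the filtered sum
  have hre : ∑ j ∈ (Finset.Icc 1 m).filter (fun j => Odd j), Real.sin ((d:ℝ) * ((j:ℝ)*π/N))
      = ∑ l ∈ range M, Real.sin ((2*(l:ℝ)+1)*φ) := by
    refine Finset.sum_nbij' (i := fun j => (j-1)/2) (j := fun l => 2*l+1) ?_ ?_ ?_ ?_ ?_
    · intro j hj
      simp only [Finset.mem_filter, Finset.mem_Icc, Nat.odd_iff] at hj
      simp only [Finset.mem_range, hMdef]
      omega
    · intro l hl
      simp only [Finset.mem_range, hMdef] at hl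
      simp only [Finset.mem_filter, Finset.mem_Icc, Nat.odd_iff]
      omega
    · intro j hj
      simp only [Finset.mem_filter, Finset.mem_Icc, Nat.odd_iff] at hj
      show 2*((j-1)/2)+1 = j
      omega
    · intro l hl
      show (2*l+1-1)/2 = l
      omega
    · intro j hj
      simp only [Finset.mem_filter, Finset.mem_Icc, Nat.odd_iff] at hj
      have h2 : (2*((j-1)/2)+1 : ℕ) = j := by omega
      have : (2*(((j-1)/2 : ℕ):ℝ)+1) = (j:ℝ) := by exact_mod_cast congrArg (Nat.cast : ℕ → ℝ) h2
      rw [this, hφdef]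
      congr 1
      ring
  have htele := tele_s14 φ M
  rw [hre]
  have hSS : 2 * ∑ l ∈ range M, Real.sin ((2*(l:ℝ)+1)*φ)
      = (1 - Real.cos (2*(M:ℝ)*φ)) / Real.sin φ := by
    rw [eq_div_iff hsinφ.ne']
    linarith [htele]
  rw [hSS]
  have hsin2 : Real.sin φ = 2 * Real.sin ψ * Real.cos ψ := by rw [hφψ, Real.sin_two_mul]
  have hcos2 : Real.cos φ = 2 * (Real.cos ψ)^2 - 1 := by rw [hφψ, Real.cos_two_mul]
  have hpyth := Real.sin_sq_add_cos_sq ψ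
  have hcot : Real.cot ψ = Real.cos ψ / Real.sin ψ := Real.cot_eq_cos_div_sin ψ
  have htan : Real.tan ψ = Real.sin ψ / Real.cos ψ := Real.tan_eq_sin_div_cos ψ
  rcases Nat.even_or_odd (m+1) with hpar | hpar
  · -- m+1 = 2M
    have hM2 : m + 1 = 2 * M := by rw [hMdef]; rcases hpar with ⟨t, ht⟩; omega
    have hMR : (2*M : ℝ) = N := by rw [hN]; exact_mod_cast congrArg (Nat.cast : ℕ → ℝ) hM2.symm
    have harg : 2*(M:ℝ)*φ = (d:ℝ)*π - 0 := by
      rw [hφdef, sub_zero, ← hMR]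
      have hM0 : (M:ℝ) ≠ 0 := by
        have : 1 ≤ M := by omega
        positivity
      field_simp
    rw [harg, Real.cos_nat_mul_pi_sub, Real.cos_zero]
    rcases Nat.even_or_odd d with hd | hd
    · rw [if_neg (by simp [Nat.not_odd_iff_even.mpr hd]), if_neg (by
        rw [Nat.odd_iff]; rw [Nat.even_iff] at hd hpar; omega)]
      rw [Even.neg_one_pow hd]
      norm_num
    · rw [if_pos hd, if_pos (by rw [Nat.odd_iff] at hd ⊢; rw [Nat.even_iff] at hpar; omega)]
      rw [Odd.neg_one_pow hd, hφψ]
      have h1 := aux1 ψ hsinψ.ne' hcosψ.ne'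
      ring_nf at h1 ⊢
      linarith [h1]
  · -- m+1 = 2M+1
    have hM2 : m + 1 = 2 * M + 1 := by rw [hMdef]; rcases hpar with ⟨t, ht⟩; omega
    have hMR : (2*(M:ℝ)) = N - 1 := by
      have h' : ((2*M : ℕ) : ℝ) = ((m:ℝ)+1) - 1 := by
        rw [show (2*M : ℕ) = m by omega]; push_cast; ring
      rw [hN]; push_cast at h' ⊢; linarith
    have harg : 2*(M:ℝ)*φ = (d:ℝ)*π - φ := by
      rw [hφdef, hMR]
      field_simp
    rw [harg, Real.cos_nat_mul_pi_sub]
    rcases Nat.even_or_odd d with hd | hd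
    · rw [if_neg (by simp [Nat.not_odd_iff_even.mpr hd]), if_pos (by
        rw [Nat.odd_iff] at hpar ⊢; rw [Nat.even_iff] at hd; omega)]
      rw [Even.neg_one_pow hd, hφψ]
      have h3 := aux3 ψ hsinψ.ne' hcosψ.ne'
      ring_nf at h3 ⊢
      linarith [h3]
    · rw [if_pos hd, if_neg (by rw [Nat.odd_iff] at hd ⊢; rw [Nat.odd_iff] at hpar; omega)]
      rw [Odd.neg_one_pow hd, hφψ]
      have h2 := aux2 ψ hsinψ.ne' hcosψ.ne'
      ring_nf at h2 ⊢
      linarith [h2]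

lemma cosdiff (θ x a : ℝ) :
    Real.cos (θ*(x-a)) - Real.cos (θ*(x+a)) = 2 * Real.sin (θ*x) * Real.sin (θ*a) := by
  have h := Real.cos_sub_cos (θ*(x-a)) (θ*(x+a))
  rw [show (θ*(x-a)+θ*(x+a))/2 = θ*x by ring, show (θ*(x-a)-θ*(x+a))/2 = -(θ*a) by ring,
    Real.sin_neg] at h
  linarith

lemma cot_pi_div_two_sub' (t : ℝ) : Real.cot (π/2 - t) = Real.tan t := by
  rw [Real.cot_eq_cos_div_sin, Real.cos_pi_div_two_sub, Real.sin_pi_div_two_sub,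
    Real.tan_eq_sin_div_cos]

theorem stmt_14 (m : ℕ) (hm : 1 ≤ m) (x : ℝ) :
    ∑ k ∈ (Finset.Icc 1 m).filter (fun k => Odd k),
        (2 / ((m : ℝ) + 1)^2) * Real.cot (π * k / (2 * m + 2)) *
          (((m : ℝ) + 1 - k) * Real.sin (k * x) + (k : ℝ) * Real.sin (((m : ℝ) + 1 - k) * x))
      ≤ 1 := by
  have hπ : (0:ℝ) < π := Real.pi_pos
  have hN0 : (0:ℝ) < (m:ℝ)+1 := by positivity
  have hNne : ((m:ℝ)+1) ≠ 0 := hN0.ne'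
  set Od := (Finset.Icc 1 m).filter (fun k => Odd k) with hOd
  have stepAB : ∀ j ∈ Od,
      GG (m+1) (x - (j:ℝ)*π/((m:ℝ)+1)) - GG (m+1) (x + (j:ℝ)*π/((m:ℝ)+1))
      = 2 * ∑ d ∈ range (m+1), (((m+1:ℕ):ℝ) - d) *
          (2 * Real.sin ((d:ℝ)*x) * Real.sin ((d:ℝ) * ((j:ℝ)*π/((m:ℝ)+1)))) := by
    intro j _
    set a := (j:ℝ)*π/((m:ℝ)+1) with ha
    calc GG (m+1) (x - a) - GG (m+1) (x + a)
        = (∑ p ∈ range (m+1), ∑ q ∈ range (m+1), Real.cos (((p:ℝ) - (q:ℝ)) * (x - a)))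
          - ∑ p ∈ range (m+1), ∑ q ∈ range (m+1), Real.cos (((p:ℝ) - (q:ℝ)) * (x + a)) := by
          rw [GG_eq, GG_eq]
      _ = ∑ p ∈ range (m+1), ((∑ q ∈ range (m+1), Real.cos (((p:ℝ) - (q:ℝ)) * (x - a)))
          - ∑ q ∈ range (m+1), Real.cos (((p:ℝ) - (q:ℝ)) * (x + a))) :=
          (Finset.sum_sub_distrib _ _).symm
      _ = ∑ p ∈ range (m+1), ∑ q ∈ range (m+1),
            (Real.cos (((p:ℝ) - (q:ℝ)) * (x - a)) - Real.cos (((p:ℝ) - (q:ℝ)) * (x + a))) :=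
          Finset.sum_congr rfl fun p _ => (Finset.sum_sub_distrib _ _).symm
      _ = ∑ p ∈ range (m+1), ∑ q ∈ range (m+1),
            (2 * Real.sin (((p:ℝ) - (q:ℝ))*x) * Real.sin (((p:ℝ) - (q:ℝ))*a)) :=
          Finset.sum_congr rfl fun p _ => Finset.sum_congr rfl fun q _ =>
            cosdiff ((p:ℝ) - (q:ℝ)) x a
      _ = 2 * ∑ d ∈ range (m+1), (((m+1:ℕ):ℝ) - d) *
            (2 * Real.sin ((d:ℝ)*x) * Real.sin ((d:ℝ) * a)) := by
          refine double_sum (fun d => 2 * Real.sin ((d:ℝ)*x) * Real.sin ((d:ℝ) * a)) (by simp)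
            (fun p q => 2 * Real.sin (((p:ℝ) - (q:ℝ))*x) * Real.sin (((p:ℝ) - (q:ℝ))*a))
            (fun p q => by
              show 2 * Real.sin (((p:ℝ) - (q:ℝ))*x) * Real.sin (((p:ℝ) - (q:ℝ))*a)
                = 2 * Real.sin (((q:ℝ) - (p:ℝ))*x) * Real.sin (((q:ℝ) - (p:ℝ))*a)
              rw [show ((q:ℝ) - p) = -((p:ℝ) - q) by ring]
              simp only [neg_mul, Real.sin_neg]
              ring)
            (fun p q hqp => by
              show 2 * Real.sin (((p:ℝ) - (q:ℝ))*x) * Real.sin (((p:ℝ) - (q:ℝ))*a)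
                = 2 * Real.sin (((p-q:ℕ):ℝ)*x) * Real.sin (((p-q:ℕ):ℝ)*a)
              rw [Nat.cast_sub hqp])
            (m+1)
  have key : ∑ j ∈ Od, (GG (m+1) (x - (j:ℝ)*π/((m:ℝ)+1)) - GG (m+1) (x + (j:ℝ)*π/((m:ℝ)+1)))
      = ((m:ℝ)+1)^2 * ∑ k ∈ Od,
        (2 / ((m : ℝ) + 1)^2) * Real.cot (π * k / (2 * m + 2)) *
          (((m : ℝ) + 1 - k) * Real.sin (k * x) + (k : ℝ) * Real.sin (((m : ℝ) + 1 - k) * x)) := by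
    have reidx : ∑ d ∈ (Finset.Icc 1 m).filter (fun d => Odd (m+1-d)),
        (((m+1:ℕ):ℝ) - d) * (2 * Real.sin ((d:ℝ)*x)) * Real.tan ((d:ℝ)*π/(2*((m:ℝ)+1)))
        = ∑ j ∈ Od, (j:ℝ) * (2 * Real.sin ((((m:ℝ)+1) - j)*x))
            * Real.cot ((j:ℝ)*π/(2*((m:ℝ)+1))) := by
      refine Finset.sum_nbij' (i := fun d => m+1-d) (j := fun j => m+1-j) ?_ ?_ ?_ ?_ ?_
      · intro d hd
        simp only [hOd, Finset.mem_filter, Finset.mem_Icc, Nat.odd_iff] at hd ⊢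
        omega
      · intro j hj
        rw [hOd] at hj
        simp only [Finset.mem_filter, Finset.mem_Icc, Nat.odd_iff] at hj ⊢
        omega
      · intro d hd
        simp only [Finset.mem_filter, Finset.mem_Icc] at hd
        show m+1-(m+1-d) = d
        omega
      · intro j hj
        rw [hOd] at hj
        simp only [Finset.mem_filter, Finset.mem_Icc] at hj
        show m+1-(m+1-j) = j
        omega
      · intro d hd
        simp only [Finset.mem_filter, Finset.mem_Icc] at hd
        show (((m+1:ℕ):ℝ) - d) * (2 * Real.sin ((d:ℝ)*x)) * Real.tan ((d:ℝ)*π/(2*((m:ℝ)+1)))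
          = ((m+1-d:ℕ):ℝ) * (2 * Real.sin ((((m:ℝ)+1) - ((m+1-d:ℕ):ℝ))*x))
            * Real.cot (((m+1-d:ℕ):ℝ)*π/(2*((m:ℝ)+1)))
        have hd1 : (1:ℕ) ≤ d := hd.1.1
        have hdm : d ≤ m := hd.1.2
        have hcast : (((m+1-d : ℕ)):ℝ) = ((m:ℝ)+1) - d := by
          rw [Nat.cast_sub (by omega)]
          push_cast
          ring
        have hcast2 : (((m:ℝ)+1) - ((m+1-d:ℕ):ℝ)) = (d:ℝ) := by rw [hcast]; ring
        rw [hcast2, hcast]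
        have harg : (((m:ℝ)+1) - d)*π/(2*((m:ℝ)+1)) = π/2 - (d:ℝ)*π/(2*((m:ℝ)+1)) := by
          field_simp
        rw [harg, cot_pi_div_two_sub']
        push_cast
        ring
    calc ∑ j ∈ Od, (GG (m+1) (x - (j:ℝ)*π/((m:ℝ)+1)) - GG (m+1) (x + (j:ℝ)*π/((m:ℝ)+1)))
        = ∑ j ∈ Od, 2 * ∑ d ∈ range (m+1), (((m+1:ℕ):ℝ) - d) *
            (2 * Real.sin ((d:ℝ)*x) * Real.sin ((d:ℝ) * ((j:ℝ)*π/((m:ℝ)+1)))) :=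
          Finset.sum_congr rfl stepAB
      _ = ∑ j ∈ Od, ∑ d ∈ range (m+1), (((m+1:ℕ):ℝ) - d) * (2 * Real.sin ((d:ℝ)*x))
            * (2 * Real.sin ((d:ℝ) * ((j:ℝ)*π/((m:ℝ)+1)))) :=
          Finset.sum_congr rfl fun j _ => by
            rw [Finset.mul_sum]
            exact Finset.sum_congr rfl fun d _ => by ring
      _ = ∑ d ∈ range (m+1), ∑ j ∈ Od, (((m+1:ℕ):ℝ) - d) * (2 * Real.sin ((d:ℝ)*x))
            * (2 * Real.sin ((d:ℝ) * ((j:ℝ)*π/((m:ℝ)+1)))) := Finset.sum_comm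
      _ = ∑ d ∈ range (m+1), (((m+1:ℕ):ℝ) - d) * (2 * Real.sin ((d:ℝ)*x))
            * (2 * ∑ j ∈ Od, Real.sin ((d:ℝ) * ((j:ℝ)*π/((m:ℝ)+1)))) :=
          Finset.sum_congr rfl fun d _ => by simp only [Finset.mul_sum]
      _ = ∑ d ∈ Finset.Icc 1 m, (((m+1:ℕ):ℝ) - d) * (2 * Real.sin ((d:ℝ)*x))
            * (2 * ∑ j ∈ Od, Real.sin ((d:ℝ) * ((j:ℝ)*π/((m:ℝ)+1)))) := by
          rw [show range (m+1) = insert 0 (Finset.Icc 1 m) from by ext t; simp; omega]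
          rw [Finset.sum_insert (by simp)]
          simp
      _ = ∑ d ∈ Finset.Icc 1 m, (((m+1:ℕ):ℝ) - d) * (2 * Real.sin ((d:ℝ)*x))
            * ((if Odd d then Real.cot ((d:ℝ)*π/(2*((m:ℝ)+1))) else 0)
              + (if Odd (m+1-d) then Real.tan ((d:ℝ)*π/(2*((m:ℝ)+1))) else 0)) :=
          Finset.sum_congr rfl fun d hd => by
            rw [hOd, sigma_eq m hm d (Finset.mem_Icc.mp hd).1 (Finset.mem_Icc.mp hd).2]
      _ = ∑ d ∈ Finset.Icc 1 m,
            ((if Odd d then (((m+1:ℕ):ℝ) - d) * (2 * Real.sin ((d:ℝ)*x))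
                * Real.cot ((d:ℝ)*π/(2*((m:ℝ)+1))) else 0)
            + (if Odd (m+1-d) then (((m+1:ℕ):ℝ) - d) * (2 * Real.sin ((d:ℝ)*x))
                * Real.tan ((d:ℝ)*π/(2*((m:ℝ)+1))) else 0)) :=
          Finset.sum_congr rfl fun d _ => by
            simp only [mul_add, mul_ite, mul_zero]
      _ = (∑ d ∈ Od, (((m+1:ℕ):ℝ) - d) * (2 * Real.sin ((d:ℝ)*x))
            * Real.cot ((d:ℝ)*π/(2*((m:ℝ)+1))))
          + ∑ d ∈ (Finset.Icc 1 m).filter (fun d => Odd (m+1-d)),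
              (((m+1:ℕ):ℝ) - d) * (2 * Real.sin ((d:ℝ)*x))
              * Real.tan ((d:ℝ)*π/(2*((m:ℝ)+1))) := by
          rw [Finset.sum_add_distrib, ← Finset.sum_filter, ← Finset.sum_filter, hOd]
      _ = ∑ j ∈ Od, ((((m+1:ℕ):ℝ) - j) * (2 * Real.sin ((j:ℝ)*x))
              * Real.cot ((j:ℝ)*π/(2*((m:ℝ)+1)))
            + (j:ℝ) * (2 * Real.sin ((((m:ℝ)+1) - j)*x))
              * Real.cot ((j:ℝ)*π/(2*((m:ℝ)+1)))) := by
          rw [reidx, ← Finset.sum_add_distrib]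
      _ = ((m:ℝ)+1)^2 * ∑ k ∈ Od,
            (2 / ((m : ℝ) + 1)^2) * Real.cot (π * k / (2 * m + 2)) *
              (((m : ℝ) + 1 - k) * Real.sin (k * x)
                + (k : ℝ) * Real.sin (((m : ℝ) + 1 - k) * x)) := by
          rw [Finset.mul_sum]
          refine Finset.sum_congr rfl fun j _ => ?_
          rw [show π * (j:ℝ) / (2 * (m:ℝ) + 2) = (j:ℝ)*π/(2*((m:ℝ)+1)) by ring]
          have hcast : ((m+1:ℕ):ℝ) = (m:ℝ)+1 := by push_cast; ring
          rw [hcast]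
          field_simp
  -- final bounding
  have hdrop : ∑ j ∈ Od, (GG (m+1) (x - (j:ℝ)*π/((m:ℝ)+1)) - GG (m+1) (x + (j:ℝ)*π/((m:ℝ)+1)))
      ≤ ∑ j ∈ Od, GG (m+1) (x - (j:ℝ)*π/((m:ℝ)+1)) :=
    Finset.sum_le_sum fun j _ => by
      have := GG_nonneg (m+1) (x + (j:ℝ)*π/((m:ℝ)+1)); linarith
  have hsubset : ∑ j ∈ Od, GG (m+1) (x - (j:ℝ)*π/((m:ℝ)+1))
      ≤ ∑ t ∈ (range (2*(m+1))).filter (fun t => Odd t), GG (m+1) (x - (t:ℝ)*π/((m:ℝ)+1)) := by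
    refine Finset.sum_le_sum_of_subset_of_nonneg ?_ fun t _ _ => GG_nonneg _ _
    intro t ht
    rw [hOd] at ht
    simp only [Finset.mem_filter, Finset.mem_Icc, Finset.mem_range] at ht ⊢
    exact ⟨by omega, ht.2⟩
  have hgrid : ∑ t ∈ (range (2*(m+1))).filter (fun t => Odd t), GG (m+1) (x - (t:ℝ)*π/((m:ℝ)+1))
      = ((m:ℝ)+1)^2 := by
    have hsamp := sampling (m+1) (by omega) x
    have hre : ∑ t ∈ (range (2*(m+1))).filter (fun t => Odd t),
        GG (m+1) (x - (t:ℝ)*π/((m:ℝ)+1))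
        = ∑ l ∈ range (m+1), GG (m+1) (x - (2*(l:ℝ)+1)*π/((m+1:ℕ):ℝ)) := by
      refine Finset.sum_nbij' (i := fun t => (t-1)/2) (j := fun l => 2*l+1) ?_ ?_ ?_ ?_ ?_
      · intro t ht
        simp only [Finset.mem_filter, Finset.mem_range, Nat.odd_iff] at ht ⊢
        omega
      · intro l hl
        simp only [Finset.mem_filter, Finset.mem_range, Nat.odd_iff] at hl ⊢
        omega
      · intro t ht
        simp only [Finset.mem_filter, Finset.mem_range, Nat.odd_iff] at ht
        show 2*((t-1)/2)+1 = t
        omega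
      · intro l _
        show (2*l+1-1)/2 = l
        omega
      · intro t ht
        simp only [Finset.mem_filter, Finset.mem_range, Nat.odd_iff] at ht
        congr 1
        have h2 : (2*((t-1)/2)+1 : ℕ) = t := by omega
        have h3 : (2*(((t-1)/2 : ℕ):ℝ)+1) = (t:ℝ) := by exact_mod_cast congrArg (Nat.cast : ℕ → ℝ) h2
        rw [← h3]
        push_cast
        ring
    rw [hre]
    rw [hsamp]
    push_cast
    ring
  have hfin : ((m:ℝ)+1)^2 * (∑ k ∈ Od,
        (2 / ((m : ℝ) + 1)^2) * Real.cot (π * k / (2 * m + 2)) *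
          (((m : ℝ) + 1 - k) * Real.sin (k * x) + (k : ℝ) * Real.sin (((m : ℝ) + 1 - k) * x)))
      ≤ ((m:ℝ)+1)^2 * 1 := by
    rw [← key, mul_one]
    exact le_trans hdrop (le_trans hsubset (le_of_eq hgrid))
  exact le_of_mul_le_mul_left hfin (by positivity)
end

section
/- Let m be a positive integer and define c_m := (2/(m+1)) ∑_{1 ≤ j ≤ m, j odd} cot(πj/(2m+2)). For every Borel probability measure μ on ℝ, min_{1 ≤ k ≤ m} E_μ[sin(kx)] ≤ 1/c_m, where E_μ[sin(kx)] := ∫_ℝ sin(kx) dμ(x). -/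
open MeasureTheory Real

namespace Stmt15Aux

open Finset

lemma tel_cos (a d : ℝ) (N : ℕ) :
    2 * sin (d/2) * ∑ j ∈ range N, cos (a + j*d)
      = sin (a + N*d - d/2) - sin (a - d/2) := by
  induction N with
  | zero => simp
  | succ n ih =>
    have e1 : a + ((n+1:ℕ):ℝ)*d - d/2 = (a + (n:ℝ)*d) + d/2 := by push_cast; ring
    have e2 : a + ((n:ℕ):ℝ)*d - d/2 = (a + (n:ℝ)*d) - d/2 := by ring
    rw [sum_range_succ, mul_add, ih, e1, e2]
    simp only [sin_add, sin_sub, cos_add, cos_sub]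
    ring

lemma tel_sin (a d : ℝ) (N : ℕ) :
    2 * sin (d/2) * ∑ j ∈ range N, sin (a + j*d)
      = cos (a - d/2) - cos (a + N*d - d/2) := by
  induction N with
  | zero => simp
  | succ n ih =>
    have e1 : a + ((n+1:ℕ):ℝ)*d - d/2 = (a + (n:ℝ)*d) + d/2 := by push_cast; ring
    have e2 : a + ((n:ℕ):ℝ)*d - d/2 = (a + (n:ℝ)*d) - d/2 := by ring
    rw [sum_range_succ, mul_add, ih, e1, e2]
    simp only [sin_add, sin_sub, cos_add, cos_sub]
    ring

/-- Fejér kernel expansion. -/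
lemma lF (n : ℕ) (y : ℝ) :
    (∑ r ∈ range n, cos (r*y))^2 + (∑ r ∈ range n, sin (r*y))^2
      = 2*(∑ k ∈ range n, ((n:ℝ) - k) * cos (k*y)) - n := by
  induction n with
  | zero => simp
  | succ n ih =>
    have key : ∑ r ∈ range n, (cos (r*y) * cos (n*y) + sin (r*y) * sin (n*y))
        = ∑ r ∈ range n, cos (((r:ℝ)+1)*y) := by
      rw [← sum_range_reflect (fun r => cos (((r:ℝ)+1)*y)) n]
      refine sum_congr rfl fun r hr => ?_
      have hr' : r < n := mem_range.mp hr
      have hc : ((n - 1 - r : ℕ) : ℝ) = (n : ℝ) - r - 1 := by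
        have : n - 1 - r = n - (r+1) := by omega
        rw [this, Nat.cast_sub (by omega)]
        push_cast; ring
      rw [← cos_sub, hc]
      rw [show ((n:ℝ) - r - 1 + 1)*y = -((r:ℝ)*y - ((n:ℝ)*y)) + 0 by ring, add_zero, cos_neg]
    have s1 : ∑ k ∈ range (n+1), (((n+1:ℕ):ℝ) - k)*cos (k*y)
        = ∑ k ∈ range n, ((n:ℝ) - k)*cos (k*y) + (1 + ∑ r ∈ range n, cos (((r:ℝ)+1)*y)) := by
      have A : ∀ k:ℕ, (((n+1:ℕ):ℝ) - k)*cos (k*y) = ((n:ℝ)-k)*cos (k*y) + cos (k*y) := by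
        intro k; push_cast; ring
      simp only [A, sum_add_distrib]
      rw [sum_range_succ (fun k : ℕ => ((n:ℝ)-k)*cos (k*y)) n,
          sum_range_succ' (fun k : ℕ => cos ((k:ℝ)*y)) n]
      push_cast
      simp only [sub_self, zero_mul, add_zero, Nat.cast_zero, zero_mul, cos_zero]
      ring
    have key2 : (∑ r ∈ range n, cos (r*y)) * cos (n*y) + (∑ r ∈ range n, sin (r*y)) * sin (n*y)
        = ∑ r ∈ range n, cos (((r:ℝ)+1)*y) := by
      rw [← key, sum_add_distrib, sum_mul, sum_mul]
    rw [sum_range_succ, sum_range_succ, s1]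
    have pyth := sin_sq_add_cos_sq ((n:ℝ)*y)
    push_cast
    linear_combination ih + 2*key2 + pyth

lemma step2 (u v : ℝ) :
    2*sin u*(cos u - cos (v + u)) + 4*sin u^2*sin (v + 2*u)
      = 2*sin u*cos u + sin (v + 2*u) - sin (v + 2*u + 2*u) := by
  have h := sin_sq_add_cos_sq u
  simp only [sin_add, cos_add, sin_two_mul, cos_two_mul]
  linear_combination (8*sin u*cos u*cos v + sin v*(4*cos u^2 - 2)) * h

/-- conjugate-Fejér-type identity. -/
lemma l2 (t : ℕ) (θ : ℝ) :
    4 * sin (θ/2)^2 * ∑ k ∈ Icc 1 t, (((t:ℝ)+1) - k) * sin (k*θ)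
      = ((t:ℝ)+1) * sin θ - sin ((((t:ℝ))+1)*θ) := by
  induction t with
  | zero => simp
  | succ t ih =>
    have hsplit : ∑ k ∈ Icc 1 (t+1), (((t+1:ℕ):ℝ)+1 - k) * sin (k*θ)
        = (∑ k ∈ Icc 1 t, (((t:ℝ)+1) - k) * sin (k*θ))
          + ((∑ k ∈ Icc 1 t, sin (k*θ)) + sin (((t:ℝ)+1)*θ)) := by
      rw [sum_Icc_succ_top (by omega) (fun k : ℕ => (((t+1:ℕ):ℝ)+1 - k) * sin (k*θ))]
      push_cast
      have A : ∀ k:ℕ, ((t:ℝ)+1+1 - k)*sin (k*θ) = ((t:ℝ)+1 - k)*sin (k*θ) + sin (k*θ) := by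
        intro k; ring
      simp only [A, sum_add_distrib]
      ring
    have hB : 2 * sin (θ/2) * ∑ k ∈ Icc 1 t, sin (k*θ)
        = cos (θ/2) - cos ((t:ℝ)*θ + θ/2) := by
      have : ∑ k ∈ Icc 1 t, sin (k*θ) = ∑ j ∈ range t, sin (θ + j*θ) := by
        rw [show Icc 1 t = Ico 1 (t+1) by rw [Finset.Ico_add_one_right_eq_Icc], sum_Ico_eq_sum_range]
        refine sum_congr (by norm_num) fun j hj => ?_
        push_cast; ring_nf
      rw [this, tel_sin θ θ t, show θ - θ/2 = θ/2 by ring,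
          show θ + (t:ℝ)*θ - θ/2 = (t:ℝ)*θ + θ/2 by ring]
    rw [hsplit]
    have hstep := step2 (θ/2) ((t:ℝ)*θ)
    rw [show ((t:ℝ)*θ + 2*(θ/2)) = ((t:ℝ)+1)*θ by ring] at hstep
    rw [show (((t:ℝ)+1)*θ + 2*(θ/2)) = ((t:ℝ)+1+1)*θ by ring] at hstep
    have hsin : sin θ = 2*sin (θ/2)*cos (θ/2) := by
      rw [show θ = 2*(θ/2) by ring, sin_two_mul]; ring_nf
    push_cast
    linear_combination ih + 2*sin (θ/2)*hB + hstep - hsin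


noncomputable def Om (n k : ℕ) : ℝ :=
  ∑ j ∈ range (n/2), sin ((k:ℝ)*((2*(j:ℝ)+1)*π/(n:ℝ)))

noncomputable def bb (n k : ℕ) : ℝ := 4*((n:ℝ)-(k:ℝ))/(n:ℝ)^2 * Om n k

noncomputable def Kq (n : ℕ) (y : ℝ) : ℝ :=
  ((∑ r ∈ range n, cos (r*y))^2 + (∑ r ∈ range n, sin (r*y))^2)/(n:ℝ)^2

lemma Kq_nonneg (n : ℕ) (y : ℝ) : 0 ≤ Kq n y := by
  unfold Kq; positivity

lemma sin_pos_grid (n k : ℕ) (hk1 : 1 ≤ k) (hk2 : k ≤ n - 1) : 0 < sin ((k:ℝ)*π/(n:ℝ)) := by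
  have hn : 2 ≤ n := by omega
  have h1 : 0 < (k:ℝ)*π/(n:ℝ) := by
    have : (0:ℝ) < (k:ℝ) := by exact_mod_cast hk1
    have : (0:ℝ) < (n:ℝ) := by positivity
    positivity
  have h2 : (k:ℝ)*π/(n:ℝ) < π := by
    rw [div_lt_iff₀ (by positivity)]
    have : (k:ℝ) < (n:ℝ) := by exact_mod_cast (by omega : k < n)
    nlinarith [pi_pos]
  exact sin_pos_of_pos_of_lt_pi h1 h2

lemma Om_nonneg (n k : ℕ) (hk1 : 1 ≤ k) (hk2 : k ≤ n - 1) : 0 ≤ Om n k := by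
  have hn : 2 ≤ n := by omega
  have hnR : (0:ℝ) < (n:ℝ) := by positivity
  have htel := tel_sin ((k:ℝ)*π/(n:ℝ)) (2*(k:ℝ)*π/(n:ℝ)) (n/2)
  have hOm : Om n k = ∑ j ∈ range (n/2), sin ((k:ℝ)*π/(n:ℝ) + (j:ℝ)*(2*(k:ℝ)*π/(n:ℝ))) := by
    unfold Om
    refine sum_congr rfl fun j hj => ?_
    congr 1; field_simp; ring
  have harg : (k:ℝ)*π/(n:ℝ) - (2*(k:ℝ)*π/(n:ℝ))/2 = 0 := by ring
  have hs : 0 < sin ((k:ℝ)*π/(n:ℝ)) := sin_pos_grid n k hk1 hk2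
  have hd : sin ((2*(k:ℝ)*π/(n:ℝ))/2) = sin ((k:ℝ)*π/(n:ℝ)) := by congr 1; ring
  rw [hOm]
  rw [hd, harg, cos_zero] at htel
  nlinarith [cos_le_one ((k:ℝ)*π/(n:ℝ) + ((n/2 : ℕ):ℝ)*(2*(k:ℝ)*π/(n:ℝ)) - 2*(k:ℝ)*π/(n:ℝ)/2), htel]

lemma bb_nonneg (n k : ℕ) (hk1 : 1 ≤ k) (hk2 : k ≤ n - 1) : 0 ≤ bb n k := by
  have hn : 2 ≤ n := by omega
  have h1 : (k:ℝ) ≤ (n:ℝ) := by exact_mod_cast (by omega : k ≤ n)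
  have h2 : (0:ℝ) < (n:ℝ) := by positivity
  have := Om_nonneg n k hk1 hk2
  unfold bb
  have h4 : 0 ≤ 4*((n:ℝ)-(k:ℝ)) := by linarith
  exact mul_nonneg (div_nonneg h4 (by positivity)) (Om_nonneg n k hk1 hk2)

lemma bb_one_pos (n : ℕ) (hn : 2 ≤ n) : 0 < bb n 1 := by
  have hnR : (0:ℝ) < (n:ℝ) := by positivity
  have h1 : (1:ℝ) < (n:ℝ) := by exact_mod_cast hn.trans_lt' one_lt_two
  have hOm : 0 < Om n 1 := by
    unfold Om
    refine sum_pos (fun j hj => ?_) ?_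
    · have hj' : j < n/2 := mem_range.mp hj
      refine sin_pos_of_pos_of_lt_pi (by positivity) ?_
      push_cast
      rw [one_mul, div_lt_iff₀ hnR]
      have : 2*(j:ℝ)+1 < (n:ℝ) := by
        have : 2*j+1 < n := by omega
        exact_mod_cast this
      nlinarith [pi_pos]
    · simp only [nonempty_range_iff]
      omega
  unfold bb
  have h4 : 0 < 4*((n:ℝ)-1)/(n:ℝ)^2 := div_pos (by linarith) (by positivity)
  simpa using mul_pos h4 hOm

/-- the node value identity. -/
lemma node (n j : ℕ) (hn : 2 ≤ n) (hj : j < n/2) :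
    ∑ k ∈ Finset.Icc 1 (n-1), ((n:ℝ) - k) * sin ((k:ℝ)*((2*(j:ℝ)+1)*π/(n:ℝ)))
      = (n:ℝ)/2 * Real.cot ((2*(j:ℝ)+1)*π/(2*(n:ℝ))) := by
  have hnR : (0:ℝ) < (n:ℝ) := by positivity
  set θ : ℝ := (2*(j:ℝ)+1)*π/(n:ℝ) with hθ
  have hcast : ((n-1:ℕ):ℝ) + 1 = (n:ℝ) := by
    rw [Nat.cast_sub (by omega)]; ring
  have H := l2 (n-1) θ
  rw [hcast] at H
  have hnθ : sin ((n:ℝ)*θ) = 0 := by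
    have : (n:ℝ)*θ = ((2*j+1:ℕ):ℝ)*π := by
      rw [hθ]; push_cast; field_simp
    rw [this, sin_nat_mul_pi]
  rw [hnθ] at H
  have hhalf : θ/2 = (2*(j:ℝ)+1)*π/(2*(n:ℝ)) := by rw [hθ]; ring
  have hspos : 0 < sin (θ/2) := by
    refine sin_pos_of_pos_of_lt_pi ?_ ?_
    · rw [hhalf]; positivity
    · rw [hhalf, div_lt_iff₀ (by positivity)]
      have : 2*(j:ℝ)+1 < 2*(n:ℝ) := by
        have : 2*j+1 < 2*n := by omega
        exact_mod_cast this
      nlinarith [pi_pos]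
  have hsinθ : sin θ = 2*sin (θ/2)*cos (θ/2) := by
    rw [show θ = 2*(θ/2) by ring, sin_two_mul]; ring_nf
  rw [hsinθ] at H
  rw [← hhalf, Real.cot_eq_cos_div_sin]
  rw [sub_zero] at H
  field_simp
  nlinarith [H, hspos]

/-- kernel difference identity. -/
lemma kernel_diff (n : ℕ) (hn : 2 ≤ n) (t x : ℝ) :
    Kq n (x-t) - Kq n (x+t)
      = ∑ k ∈ Finset.Icc 1 (n-1), (4*((n:ℝ)-k)/(n:ℝ)^2) * (sin ((k:ℝ)*t) * sin ((k:ℝ)*x)) := by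
  have hnR : (0:ℝ) < (n:ℝ) := by positivity
  have hr : ∀ (f : ℕ → ℝ), f 0 = 0 → ∑ k ∈ range n, f k = ∑ k ∈ Finset.Icc 1 (n-1), f k := by
    intro f hf
    rw [range_eq_Ico, sum_eq_sum_Ico_succ_bot (by omega) f, hf, zero_add]
    have he : Finset.Ico 1 n = Finset.Icc 1 (n-1) := by
      rw [← Finset.Ico_add_one_right_eq_Icc]
      congr 1
      omega
    rw [he]
  have key : ∑ k ∈ range n, ((n:ℝ)-k) * cos ((k:ℝ)*(x-t)) - ∑ k ∈ range n, ((n:ℝ)-k) * cos ((k:ℝ)*(x+t))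
      = ∑ k ∈ Finset.Icc 1 (n-1), 2*((n:ℝ)-k) * (sin ((k:ℝ)*t) * sin ((k:ℝ)*x)) := by
    rw [← sum_sub_distrib]
    rw [hr (fun k => ((n:ℝ)-k) * cos ((k:ℝ)*(x-t)) - ((n:ℝ)-k) * cos ((k:ℝ)*(x+t))) (by simp)]
    refine sum_congr rfl fun k hk => ?_
    rw [mul_sub ((k:ℝ)) x t, mul_add ((k:ℝ)) x t, cos_sub, cos_add]
    ring
  have expand : Kq n (x-t) - Kq n (x+t)
      = 2*((∑ k ∈ range n, ((n:ℝ)-k) * cos ((k:ℝ)*(x-t)))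
          - ∑ k ∈ range n, ((n:ℝ)-k) * cos ((k:ℝ)*(x+t)))/(n:ℝ)^2 := by
    unfold Kq
    rw [lF n (x-t), lF n (x+t)]
    ring
  rw [expand, key, Finset.mul_sum, Finset.sum_div]
  refine sum_congr rfl fun k hk => by ring

lemma grid0 (n k : ℕ) (hn : 2 ≤ n) (hk1 : 1 ≤ k) (hk2 : k ≤ n-1) (x : ℝ) :
    ∑ j ∈ range n, cos ((k:ℝ)*(x - (2*(j:ℝ)+1)*π/(n:ℝ))) = 0 := by
  have hnR : (0:ℝ) < (n:ℝ) := by positivity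
  have htel := tel_cos ((k:ℝ)*x - (k:ℝ)*π/(n:ℝ)) (-(2*(k:ℝ)*π/(n:ℝ))) n
  have hmatch : ∑ j ∈ range n, cos ((k:ℝ)*(x - (2*(j:ℝ)+1)*π/(n:ℝ)))
      = ∑ j ∈ range n, cos (((k:ℝ)*x - (k:ℝ)*π/(n:ℝ)) + (j:ℝ)*(-(2*(k:ℝ)*π/(n:ℝ)))) := by
    refine sum_congr rfl fun j hj => ?_
    congr 1; field_simp; ring
  have harg1 : ((k:ℝ)*x - (k:ℝ)*π/(n:ℝ)) - (-(2*(k:ℝ)*π/(n:ℝ)))/2 = (k:ℝ)*x := by ring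
  have harg2 : ((k:ℝ)*x - (k:ℝ)*π/(n:ℝ)) + (n:ℝ)*(-(2*(k:ℝ)*π/(n:ℝ))) - (-(2*(k:ℝ)*π/(n:ℝ)))/2
      = (k:ℝ)*x - (k:ℤ)*(2*π) := by push_cast; field_simp; ring
  rw [harg1, harg2] at htel
  rw [Real.sin_sub_int_mul_two_pi, sub_self] at htel
  have hs : sin ((-(2*(k:ℝ)*π/(n:ℝ)))/2) ≠ 0 := by
    have : (-(2*(k:ℝ)*π/(n:ℝ)))/2 = -((k:ℝ)*π/(n:ℝ)) := by ring
    rw [this, sin_neg, neg_ne_zero]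
    exact (sin_pos_grid n k hk1 hk2).ne'
  rw [hmatch]
  rcases mul_eq_zero.mp htel with h | h
  · rcases mul_eq_zero.mp h with h' | h'
    · norm_num at h'
    · exact absurd h' hs
  · exact h

lemma grid_sum (n : ℕ) (hn : 2 ≤ n) (x : ℝ) :
    ∑ j ∈ range n, Kq n (x - (2*(j:ℝ)+1)*π/(n:ℝ)) = 1 := by
  have hnR : (0:ℝ) < (n:ℝ) := by positivity
  have per : ∀ j : ℕ, Kq n (x - (2*(j:ℝ)+1)*π/(n:ℝ))
      = (2*(∑ k ∈ range n, ((n:ℝ)-k) * cos ((k:ℝ)*(x - (2*(j:ℝ)+1)*π/(n:ℝ)))) - (n:ℝ))/(n:ℝ)^2 := by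
    intro j
    unfold Kq
    rw [lF n (x - (2*(j:ℝ)+1)*π/(n:ℝ))]
  calc ∑ j ∈ range n, Kq n (x - (2*(j:ℝ)+1)*π/(n:ℝ))
      = ∑ j ∈ range n, (2*(∑ k ∈ range n, ((n:ℝ)-k) * cos ((k:ℝ)*(x - (2*(j:ℝ)+1)*π/(n:ℝ)))) - (n:ℝ))/(n:ℝ)^2 := by
        exact sum_congr rfl fun j _ => per j
    _ = (2*(∑ j ∈ range n, ∑ k ∈ range n, ((n:ℝ)-k) * cos ((k:ℝ)*(x - (2*(j:ℝ)+1)*π/(n:ℝ)))) - (n:ℝ)*(n:ℝ))/(n:ℝ)^2 := by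
        rw [← Finset.sum_div, sum_sub_distrib, ← Finset.mul_sum, Finset.sum_const,
          Finset.card_range, nsmul_eq_mul]
    _ = (2*(∑ k ∈ range n, ∑ j ∈ range n, ((n:ℝ)-k) * cos ((k:ℝ)*(x - (2*(j:ℝ)+1)*π/(n:ℝ)))) - (n:ℝ)*(n:ℝ))/(n:ℝ)^2 := by
        rw [sum_comm]
    _ = (2*((n:ℝ)*(n:ℝ)) - (n:ℝ)*(n:ℝ))/(n:ℝ)^2 := by
        congr 3
        have split : ∀ (f : ℕ → ℝ), f 0 = (n:ℝ)*(n:ℝ) → (∀ k, 1 ≤ k → k ≤ n-1 → f k = 0)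
            → ∑ k ∈ range n, f k = (n:ℝ)*(n:ℝ) := by
          intro f h0 hrest
          rw [range_eq_Ico, sum_eq_sum_Ico_succ_bot (by omega) f, h0]
          have he : Finset.Ico 1 n = Finset.Icc 1 (n-1) := by
            rw [← Finset.Ico_add_one_right_eq_Icc]; congr 1; omega
          rw [he, Finset.sum_eq_zero (fun k hk => by
            have := Finset.mem_Icc.mp hk
            exact hrest k this.1 this.2), add_zero]
        refine split _ ?_ ?_
        · simp [Finset.card_range]
        · intro k h1 h2
          rw [← Finset.mul_sum, grid0 n k hn h1 h2 x, mul_zero]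
    _ = 1 := by field_simp; ring

lemma S_eq (n : ℕ) (hn : 2 ≤ n) (x : ℝ) :
    ∑ k ∈ Finset.Icc 1 (n-1), bb n k * sin ((k:ℝ)*x)
      = ∑ j ∈ range (n/2), (Kq n (x - (2*(j:ℝ)+1)*π/(n:ℝ)) - Kq n (x + (2*(j:ℝ)+1)*π/(n:ℝ))) := by
  have step : ∀ k : ℕ, bb n k * sin ((k:ℝ)*x)
      = ∑ j ∈ range (n/2), (4*((n:ℝ)-k)/(n:ℝ)^2) * (sin ((k:ℝ)*((2*(j:ℝ)+1)*π/(n:ℝ))) * sin ((k:ℝ)*x)) := by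
    intro k
    unfold bb Om
    rw [Finset.mul_sum, Finset.sum_mul]
    exact sum_congr rfl fun j _ => by ring
  rw [sum_congr rfl fun k _ => step k, sum_comm]
  exact sum_congr rfl fun j _ => (kernel_diff n hn ((2*(j:ℝ)+1)*π/(n:ℝ)) x).symm

lemma S_le_one (n : ℕ) (hn : 2 ≤ n) (x : ℝ) :
    ∑ k ∈ Finset.Icc 1 (n-1), bb n k * sin ((k:ℝ)*x) ≤ 1 := by
  rw [S_eq n hn x]
  have h1 : ∑ j ∈ range (n/2), (Kq n (x - (2*(j:ℝ)+1)*π/(n:ℝ)) - Kq n (x + (2*(j:ℝ)+1)*π/(n:ℝ)))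
      ≤ ∑ j ∈ range (n/2), Kq n (x - (2*(j:ℝ)+1)*π/(n:ℝ)) :=
    Finset.sum_le_sum fun j _ => by
      have := Kq_nonneg n (x + (2*(j:ℝ)+1)*π/(n:ℝ)); linarith
  have h2 : ∑ j ∈ range (n/2), Kq n (x - (2*(j:ℝ)+1)*π/(n:ℝ))
      ≤ ∑ j ∈ range n, Kq n (x - (2*(j:ℝ)+1)*π/(n:ℝ)) :=
    Finset.sum_le_sum_of_subset_of_nonneg
      (Finset.range_subset_range.mpr (Nat.div_le_self n 2))
      (fun j _ _ => Kq_nonneg n _)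
  calc _ ≤ _ := h1
    _ ≤ _ := h2
    _ = 1 := grid_sum n hn x

lemma bsum (n : ℕ) (hn : 2 ≤ n) :
    ∑ k ∈ Finset.Icc 1 (n-1), bb n k
      = 2/(n:ℝ) * ∑ j ∈ range (n/2), Real.cot ((2*(j:ℝ)+1)*π/(2*(n:ℝ))) := by
  have hnR : (0:ℝ) < (n:ℝ) := by positivity
  have step : ∀ k : ℕ, bb n k
      = ∑ j ∈ range (n/2), (4*((n:ℝ)-k)/(n:ℝ)^2) * sin ((k:ℝ)*((2*(j:ℝ)+1)*π/(n:ℝ))) := by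
    intro k
    unfold bb Om
    rw [Finset.mul_sum]
  rw [sum_congr rfl fun k _ => step k, sum_comm, Finset.mul_sum]
  refine sum_congr rfl fun j hj => ?_
  have hj' : j < n/2 := mem_range.mp hj
  have hnode := node n j hn hj'
  have : ∑ k ∈ Finset.Icc 1 (n-1), (4*((n:ℝ)-k)/(n:ℝ)^2) * sin ((k:ℝ)*((2*(j:ℝ)+1)*π/(n:ℝ)))
      = (4/(n:ℝ)^2) * ∑ k ∈ Finset.Icc 1 (n-1), ((n:ℝ)-k) * sin ((k:ℝ)*((2*(j:ℝ)+1)*π/(n:ℝ))) := by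
    rw [Finset.mul_sum]
    exact sum_congr rfl fun k _ => by ring
  rw [this, hnode]
  field_simp
  ring

end Stmt15Aux

theorem stmt_15 (m : ℕ) (hm : 1 ≤ m)
    (c : ℝ)
    (hc : c = (2 / ((m : ℝ) + 1)) *
      ∑ j ∈ (Finset.Icc 1 m).filter (fun j => Odd j), Real.cot (π * j / (2 * m + 2)))
    (μ : Measure ℝ) [IsProbabilityMeasure μ] :
    ∃ k : ℕ, 1 ≤ k ∧ k ≤ m ∧ (∫ x, Real.sin (k * x) ∂μ) ≤ 1 / c := by
  classical
  set n := m + 1 with hn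
  have hn2 : 2 ≤ n := by omega
  have hm1 : n - 1 = m := rfl
  -- rewrite c as the sum of the coefficients bb
  have hsum_eq : ∑ j ∈ (Finset.Icc 1 m).filter (fun j => Odd j), Real.cot (π * j / (2 * m + 2))
      = ∑ j ∈ Finset.range (n/2), Real.cot ((2*(j:ℝ)+1)*π/(2*(n:ℝ))) := by
    refine Finset.sum_nbij' (fun a => a/2) (fun r => 2*r+1) ?_ ?_ ?_ ?_ ?_
    · intro a ha
      simp only [Finset.mem_filter, Finset.mem_Icc] at ha
      obtain ⟨⟨h1, h2⟩, h3⟩ := ha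
      obtain ⟨r, hr⟩ := h3
      simp only [Finset.mem_range]
      omega
    · intro r hr
      simp only [Finset.mem_range] at hr
      simp only [Finset.mem_filter, Finset.mem_Icc]
      refine ⟨⟨by omega, by omega⟩, ⟨r, by omega⟩⟩
    · intro a ha
      simp only [Finset.mem_filter, Finset.mem_Icc] at ha
      obtain ⟨⟨h1, h2⟩, ⟨r, hr⟩⟩ := ha
      omega
    · intro r hr
      omega
    · intro a ha
      simp only [Finset.mem_filter, Finset.mem_Icc] at ha
      obtain ⟨⟨h1, h2⟩, ⟨r, hr⟩⟩ := ha
      have h2a : 2*(a/2)+1 = a := by omega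
      congr 1
      have hna : ((2*(a/2)+1 : ℕ):ℝ) = (a:ℝ) := by rw [h2a]
      push_cast at hna ⊢
      rw [hna]
      rw [hn]; push_cast; ring
  have hcsum : c = ∑ k ∈ Finset.Icc 1 m, Stmt15Aux.bb n k := by
    have hb := Stmt15Aux.bsum n hn2
    rw [hm1] at hb
    rw [hc, hsum_eq, hb]
    have hnm : (n:ℝ) = (m:ℝ)+1 := by rw [hn]; push_cast; ring
    rw [hnm]
  have hb1 : 0 < Stmt15Aux.bb n 1 := Stmt15Aux.bb_one_pos n hn2
  have hbnn : ∀ k ∈ Finset.Icc 1 m, 0 ≤ Stmt15Aux.bb n k := by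
    intro k hk
    obtain ⟨h1, h2⟩ := Finset.mem_Icc.mp hk
    exact Stmt15Aux.bb_nonneg n k h1 (by omega)
  have hcpos : 0 < c := by
    rw [hcsum]
    exact lt_of_lt_of_le hb1 (Finset.single_le_sum hbnn (Finset.mem_Icc.mpr ⟨le_refl 1, hm⟩))
  by_contra hcon
  push_neg at hcon
  have hint : ∀ k : ℕ, Integrable (fun x => Real.sin ((k:ℝ)*x)) μ := by
    intro k
    have hcont : Continuous fun x : ℝ => Real.sin ((k:ℝ)*x) :=
      Real.continuous_sin.comp (continuous_const.mul continuous_id)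
    refine (integrable_const (1:ℝ)).mono' hcont.aestronglyMeasurable ?_
    filter_upwards with x
    rw [Real.norm_eq_abs]
    exact abs_le.mpr ⟨Real.neg_one_le_sin _, Real.sin_le_one _⟩
  have hSint : Integrable (fun x => ∑ k ∈ Finset.Icc 1 m, Stmt15Aux.bb n k * Real.sin ((k:ℝ)*x)) μ :=
    integrable_finset_sum _ (fun k _ => (hint k).const_mul _)
  have hle : ∫ x, (∑ k ∈ Finset.Icc 1 m, Stmt15Aux.bb n k * Real.sin ((k:ℝ)*x)) ∂μ ≤ 1 := by
    have h1 := integral_mono hSint (integrable_const (1:ℝ))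
      (fun x => by
        have := Stmt15Aux.S_le_one n hn2 x
        rw [hm1] at this
        exact this)
    simpa using h1
  have hExp : ∫ x, (∑ k ∈ Finset.Icc 1 m, Stmt15Aux.bb n k * Real.sin ((k:ℝ)*x)) ∂μ
      = ∑ k ∈ Finset.Icc 1 m, Stmt15Aux.bb n k * ∫ x, Real.sin ((k:ℝ)*x) ∂μ := by
    rw [integral_finset_sum _ (fun k _ => (hint k).const_mul _)]
    exact Finset.sum_congr rfl fun k _ => integral_const_mul _ _
  have hgt : 1 < ∑ k ∈ Finset.Icc 1 m, Stmt15Aux.bb n k * ∫ x, Real.sin ((k:ℝ)*x) ∂μ := by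
    have h0 : ∑ k ∈ Finset.Icc 1 m, Stmt15Aux.bb n k * (1/c)
        < ∑ k ∈ Finset.Icc 1 m, Stmt15Aux.bb n k * ∫ x, Real.sin ((k:ℝ)*x) ∂μ := by
      refine Finset.sum_lt_sum ?_ ⟨1, Finset.mem_Icc.mpr ⟨le_refl 1, hm⟩, ?_⟩
      · intro k hk
        obtain ⟨h1, h2⟩ := Finset.mem_Icc.mp hk
        exact mul_le_mul_of_nonneg_left (le_of_lt (hcon k h1 h2)) (hbnn k hk)
      · exact mul_lt_mul_of_pos_left (hcon 1 (le_refl 1) hm) hb1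
    have h1 : ∑ k ∈ Finset.Icc 1 m, Stmt15Aux.bb n k * (1/c) = 1 := by
      rw [← Finset.sum_mul, ← hcsum]
      field_simp
    linarith
  rw [hExp] at hle
  linarith
end

section
/- Let m be a positive integer and c_m := (2/(m+1)) ∑_{1 ≤ j ≤ m, j odd} cot(πj/(2m+2)). Let μ_m be the probability measure assigning mass (2/((m+1)c_m))·cot(πj/(2m+2)) to the point πj/(m+1) for each odd j with 1 ≤ j ≤ m. Then E_{μ_m}[sin(kx)] = 1/c_m for every integer 1 ≤ k ≤ m. -/
open MeasureTheory Real

private lemma sum_odd_reindex (m : ℕ) (g : ℕ → ℝ) :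
    ∑ j ∈ (Finset.Icc 1 m).filter (fun j => Odd j), g j
      = ∑ t ∈ Finset.range ((m + 1) / 2), g (2 * t + 1) := by
  refine Finset.sum_nbij' (fun j => (j - 1) / 2) (fun t => 2 * t + 1) ?_ ?_ ?_ ?_ ?_
  · intro a ha
    simp only [Finset.mem_filter, Finset.mem_Icc, Nat.odd_iff] at ha
    simp only [Finset.mem_range]
    beta_reduce
    omega
  · intro a ha
    simp only [Finset.mem_range] at ha
    simp only [Finset.mem_filter, Finset.mem_Icc, Nat.odd_iff]
    omega
  · intro a ha
    simp only [Finset.mem_filter, Finset.mem_Icc, Nat.odd_iff] at ha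
    beta_reduce
    omega
  · intro a ha
    beta_reduce
    omega
  · intro a ha
    simp only [Finset.mem_filter, Finset.mem_Icc, Nat.odd_iff] at ha
    congr 1
    beta_reduce
    omega

private lemma cos_telescope (m : ℕ) (a : ℝ) :
    ∑ j ∈ (Finset.Icc 1 m).filter (fun j => Odd j), 2 * Real.sin a * Real.cos (a * j)
      = Real.sin (a * (((2 * ((m + 1) / 2) : ℕ) : ℝ))) := by
  rw [sum_odd_reindex m (fun j => 2 * Real.sin a * Real.cos (a * j))]
  have h : ∀ t ∈ Finset.range ((m + 1) / 2),
      2 * Real.sin a * Real.cos (a * ((2 * t + 1 : ℕ) : ℝ))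
        = (fun t : ℕ => Real.sin (a * (2 * t))) (t + 1)
          - (fun t : ℕ => Real.sin (a * (2 * t))) t := by
    intro t _
    simp only
    rw [Real.sin_sub_sin]
    have e1 : (a * (2 * ((t : ℝ) + 1)) - a * (2 * t)) / 2 = a := by ring
    have e2 : (a * (2 * ((t : ℝ) + 1)) + a * (2 * t)) / 2 = a * ((2 * t + 1 : ℕ) : ℝ) := by
      push_cast; ring
    push_cast
    push_cast at e1 e2
    rw [e1, e2]
  rw [Finset.sum_congr rfl h, Finset.sum_range_sub (fun t : ℕ => Real.sin (a * (2 * t)))]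
  push_cast
  simp

private lemma S_eval (m i : ℕ) (hi1 : 1 ≤ i) (him : i ≤ m) :
    ∑ j ∈ (Finset.Icc 1 m).filter (fun j => Odd j), Real.cos ((π * i / (m + 1)) * j)
      = if Odd m then 0 else -((-1 : ℝ) ^ i) / 2 := by
  set a : ℝ := π * i / (m + 1) with ha
  have hm1 : (0 : ℝ) < (m : ℝ) + 1 := by positivity
  have hi1' : (1 : ℝ) ≤ (i : ℝ) := by exact_mod_cast hi1
  have him' : (i : ℝ) ≤ (m : ℝ) := by exact_mod_cast him
  have hapos : 0 < a := by
    apply div_pos _ hm1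
    have : (0 : ℝ) < i := by linarith
    positivity
  have halt : a < π := by
    rw [ha, div_lt_iff₀ hm1]
    nlinarith [Real.pi_pos]
  have hsa : Real.sin a ≠ 0 := ne_of_gt (Real.sin_pos_of_pos_of_lt_pi hapos halt)
  have key := cos_telescope m a
  rw [← Finset.mul_sum] at key
  have hani : a * ((m : ℝ) + 1) = π * i := by
    rw [ha]; field_simp
  rcases Nat.even_or_odd m with hme | hmo
  · -- m even : 2 * ((m+1)/2) = m
    have hT : (2 * ((m + 1) / 2) : ℕ) = m := by
      rw [Nat.even_iff] at hme; omega
    rw [hT] at key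
    have harg : a * (m : ℝ) = (i : ℝ) * π - a := by
      have : a * (m : ℝ) = a * ((m : ℝ) + 1) - a := by ring
      rw [this, hani]; ring
    rw [harg, Real.sin_nat_mul_pi_sub] at key
    have hodd : ¬ Odd m := by simp [Nat.not_odd_iff_even.mpr hme]
    rw [if_neg hodd]
    set S : ℝ := ∑ j ∈ (Finset.Icc 1 m).filter (fun j => Odd j), Real.cos (a * j) with hS
    have h3 : 2 * S + (-1 : ℝ) ^ i = 0 := by
      have h4 : Real.sin a * (2 * S + (-1 : ℝ) ^ i) = Real.sin a * 0 := by
        rw [mul_zero]; linear_combination key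
      exact mul_left_cancel₀ hsa h4
    have hgoal : ∀ j : ℕ, a * (j : ℝ) = (π * i / (m + 1)) * j := by
      intro j; rw [ha]
    linarith
  · -- m odd : 2 * ((m+1)/2) = m + 1
    have hT : (2 * ((m + 1) / 2) : ℕ) = m + 1 := by
      rw [Nat.odd_iff] at hmo; omega
    rw [hT] at key
    have harg : a * ((m + 1 : ℕ) : ℝ) = (i : ℝ) * π := by
      push_cast; rw [hani]; ring
    rw [harg] at key
    rw [show ((i : ℝ) * π) = ((i : ℕ) : ℝ) * π from rfl, Real.sin_nat_mul_pi] at key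
    rw [if_pos hmo]
    have := mul_eq_zero.mp key
    rcases this with h | h
    · exact absurd (mul_eq_zero.mp h) (by push_neg; exact ⟨two_ne_zero, hsa⟩)
    · exact h

private lemma cot_sin_two (θ : ℝ) (h : Real.sin θ ≠ 0) :
    Real.cot θ * Real.sin (2 * θ) = 1 + Real.cos (2 * θ) := by
  have e : Real.cos θ / Real.sin θ * (2 * Real.sin θ * Real.cos θ)
      = 2 * Real.cos θ ^ 2 := by
    field_simp
  rw [Real.cot_eq_cos_div_sin, Real.sin_two_mul, e, Real.cos_sq]
  ring

private lemma cot_sin_step (θ : ℝ) (k : ℕ) (h : Real.sin θ ≠ 0) :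
    Real.cot θ * (Real.sin ((2 * k + 2) * θ) - Real.sin ((2 * k) * θ))
      = Real.cos ((2 * k + 2) * θ) + Real.cos ((2 * k) * θ) := by
  rw [Real.sin_sub_sin, Real.cos_add_cos, Real.cot_eq_cos_div_sin]
  have e1 : ((2 * (k : ℝ) + 2) * θ - (2 * k) * θ) / 2 = θ := by ring
  have e2 : ((2 * (k : ℝ) + 2) * θ + (2 * k) * θ) / 2 = (2 * k + 1) * θ := by ring
  rw [e1, e2]
  field_simp

private lemma main_sum (m : ℕ) (hm : 1 ≤ m) :
    ∀ k : ℕ, 1 ≤ k → k ≤ m →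
    ∑ j ∈ (Finset.Icc 1 m).filter (fun j => Odd j),
      Real.cot (π * j / (2 * m + 2)) * Real.sin (k * (π * j / (m + 1)))
      = ((m : ℝ) + 1) / 2 := by
  have hmem : ∀ j ∈ (Finset.Icc 1 m).filter (fun j => Odd j),
      (1 : ℝ) ≤ (j : ℝ) ∧ (j : ℝ) ≤ (m : ℝ) := by
    intro j hj
    simp only [Finset.mem_filter, Finset.mem_Icc] at hj
    exact ⟨by exact_mod_cast hj.1.1, by exact_mod_cast hj.1.2⟩
  have hm1 : (0 : ℝ) < (m : ℝ) + 1 := by positivity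
  have hm2 : (0 : ℝ) < 2 * (m : ℝ) + 2 := by positivity
  have hsin : ∀ j ∈ (Finset.Icc 1 m).filter (fun j => Odd j),
      Real.sin (π * j / (2 * m + 2)) ≠ 0 := by
    intro j hj
    obtain ⟨hj1, hjm⟩ := hmem j hj
    have hpos : 0 < π * (j : ℝ) / (2 * m + 2) := by
      apply div_pos _ hm2
      have : (0 : ℝ) < (j : ℝ) := by linarith
      positivity
    have hlt : π * (j : ℝ) / (2 * m + 2) < π := by
      rw [div_lt_iff₀ hm2]
      nlinarith [Real.pi_pos]
    exact ne_of_gt (Real.sin_pos_of_pos_of_lt_pi hpos hlt)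
  intro k hk1
  induction k, hk1 using Nat.le_induction with
  | base =>
    intro _
    have h1 : ∀ j ∈ (Finset.Icc 1 m).filter (fun j => Odd j),
        Real.cot (π * j / (2 * m + 2)) * Real.sin ((1 : ℕ) * (π * j / (m + 1)))
          = 1 + Real.cos ((π * (1 : ℕ) / (m + 1)) * j) := by
      intro j hj
      have hs := hsin j hj
      have e1 : ((1 : ℕ) : ℝ) * (π * j / (m + 1)) = 2 * (π * j / (2 * m + 2)) := by
        field_simp; ring
      have e2 : (π * ((1 : ℕ) : ℝ) / (m + 1)) * j = 2 * (π * j / (2 * m + 2)) := by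
        field_simp; ring
      rw [e1, e2, cot_sin_two _ hs]
    rw [Finset.sum_congr rfl h1, Finset.sum_add_distrib,
      S_eval m 1 le_rfl hm]
    have hcard : ∑ j ∈ (Finset.Icc 1 m).filter (fun j => Odd j), (1 : ℝ)
        = (((m + 1) / 2 : ℕ) : ℝ) := by
      rw [sum_odd_reindex m (fun _ => (1 : ℝ))]
      simp
    rw [hcard]
    rcases Nat.even_or_odd m with hme | hmo
    · have : ((m + 1) / 2 : ℕ) * 2 = m := by rw [Nat.even_iff] at hme; omega
      have hc : (((m + 1) / 2 : ℕ) : ℝ) * 2 = (m : ℝ) := by exact_mod_cast this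
      rw [if_neg (by simp [Nat.not_odd_iff_even.mpr hme])]
      push_cast
      linarith
    · have : ((m + 1) / 2 : ℕ) * 2 = m + 1 := by rw [Nat.odd_iff] at hmo; omega
      have hc : (((m + 1) / 2 : ℕ) : ℝ) * 2 = (m : ℝ) + 1 := by exact_mod_cast this
      rw [if_pos hmo]
      linarith
  | succ k hk ih =>
    intro hkm
    have hkm' : k ≤ m := by omega
    have h1 : ∀ j ∈ (Finset.Icc 1 m).filter (fun j => Odd j),
        Real.cot (π * j / (2 * m + 2)) * Real.sin (((k + 1 : ℕ) : ℝ) * (π * j / (m + 1)))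
          = Real.cot (π * j / (2 * m + 2)) * Real.sin ((k : ℝ) * (π * j / (m + 1)))
            + (Real.cos ((π * ((k + 1 : ℕ) : ℝ) / (m + 1)) * j)
              + Real.cos ((π * (k : ℝ) / (m + 1)) * j)) := by
      intro j hj
      have hs := hsin j hj
      set θ : ℝ := π * j / (2 * m + 2) with hθ
      have e1 : ((k + 1 : ℕ) : ℝ) * (π * j / (m + 1)) = (2 * (k : ℝ) + 2) * θ := by
        rw [hθ]; push_cast; field_simp
      have e2 : (k : ℝ) * (π * j / (m + 1)) = (2 * (k : ℝ)) * θ := by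
        rw [hθ]; field_simp
      have e3 : (π * ((k + 1 : ℕ) : ℝ) / (m + 1)) * j = (2 * (k : ℝ) + 2) * θ := by
        rw [hθ]; push_cast; field_simp
      have e4 : (π * (k : ℝ) / (m + 1)) * j = (2 * (k : ℝ)) * θ := by
        rw [hθ]; field_simp
      have hstep := cot_sin_step θ k hs
      rw [mul_sub] at hstep
      rw [e1, e2, e3, e4]
      linarith
    rw [Finset.sum_congr rfl h1, Finset.sum_add_distrib, ih hkm',
      Finset.sum_add_distrib, S_eval m (k + 1) (by omega) hkm,
      S_eval m k hk hkm']
    rcases Nat.even_or_odd m with hme | hmo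
    · rw [if_neg (by simp [Nat.not_odd_iff_even.mpr hme]),
        if_neg (by simp [Nat.not_odd_iff_even.mpr hme])]
      rw [pow_succ]
      ring
    · rw [if_pos hmo, if_pos hmo]
      ring

theorem stmt_16 (m : ℕ) (hm : 1 ≤ m)
    (c : ℝ)
    (hc : c = (2 / ((m : ℝ) + 1)) *
      ∑ j ∈ (Finset.Icc 1 m).filter (fun j => Odd j), Real.cot (π * j / (2 * m + 2)))
    (μ : Measure ℝ)
    (hμ : μ = ∑ j ∈ (Finset.Icc 1 m).filter (fun j => Odd j),
        ENNReal.ofReal (2 / (((m : ℝ) + 1) * c) * Real.cot (π * j / (2 * m + 2))) •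
          Measure.dirac (π * j / (m + 1))) :
    ∀ k : ℕ, 1 ≤ k → k ≤ m → (∫ x, Real.sin (k * x) ∂μ) = 1 / c := by
  have hm1 : (0 : ℝ) < (m : ℝ) + 1 := by positivity
  have hm2 : (0 : ℝ) < 2 * (m : ℝ) + 2 := by positivity
  have hcotpos : ∀ j ∈ (Finset.Icc 1 m).filter (fun j => Odd j),
      0 < Real.cot (π * j / (2 * m + 2)) := by
    intro j hj
    simp only [Finset.mem_filter, Finset.mem_Icc] at hj
    have hj1 : (1 : ℝ) ≤ (j : ℝ) := by exact_mod_cast hj.1.1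
    have hjm : (j : ℝ) ≤ (m : ℝ) := by exact_mod_cast hj.1.2
    have hpos : 0 < π * (j : ℝ) / (2 * m + 2) := by
      apply div_pos _ hm2
      have : (0 : ℝ) < (j : ℝ) := by linarith
      positivity
    have hlt : π * (j : ℝ) / (2 * m + 2) < π / 2 := by
      rw [div_lt_div_iff₀ hm2 two_pos]
      nlinarith [Real.pi_pos]
    rw [Real.cot_eq_cos_div_sin]
    apply div_pos
    · apply Real.cos_pos_of_mem_Ioo
      constructor <;> nlinarith [Real.pi_pos]
    · apply Real.sin_pos_of_pos_of_lt_pi hpos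
      nlinarith [Real.pi_pos]
  have hne : ((Finset.Icc 1 m).filter (fun j => Odd j)).Nonempty := by
    refine ⟨1, ?_⟩
    simp only [Finset.mem_filter, Finset.mem_Icc]
    exact ⟨⟨le_refl 1, hm⟩, odd_one⟩
  have hcpos : 0 < c := by
    rw [hc]
    apply mul_pos (by positivity)
    exact Finset.sum_pos hcotpos hne
  intro k hk1 hkm
  have hcont : Continuous (fun x : ℝ => Real.sin (k * x)) :=
    Real.continuous_sin.comp (continuous_const.mul continuous_id)
  have hint : ∀ j ∈ (Finset.Icc 1 m).filter (fun j => Odd j),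
      Integrable (fun x : ℝ => Real.sin (k * x))
        (ENNReal.ofReal (2 / (((m : ℝ) + 1) * c) * Real.cot (π * j / (2 * m + 2))) •
          Measure.dirac (π * j / (m + 1))) := by
    intro j _
    refine Integrable.smul_measure ?_ ENNReal.ofReal_ne_top
    refine Integrable.mono' (integrable_const 1) hcont.aestronglyMeasurable ?_
    filter_upwards with x
    rw [Real.norm_eq_abs]
    exact Real.abs_sin_le_one _
  rw [hμ, integral_finset_sum_measure hint]
  have hterm : ∀ j ∈ (Finset.Icc 1 m).filter (fun j => Odd j),
      ∫ x, Real.sin (k * x)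
        ∂(ENNReal.ofReal (2 / (((m : ℝ) + 1) * c) * Real.cot (π * j / (2 * m + 2))) •
          Measure.dirac (π * j / (m + 1)))
      = 2 / (((m : ℝ) + 1) * c) *
          (Real.cot (π * j / (2 * m + 2)) * Real.sin (k * (π * j / (m + 1)))) := by
    intro j hj
    rw [integral_smul_measure, integral_dirac (fun x : ℝ => Real.sin (k * x))]
    rw [ENNReal.toReal_ofReal]
    · simp only [smul_eq_mul]; ring
    · have := hcotpos j hj
      positivity
  rw [Finset.sum_congr rfl hterm, ← Finset.mul_sum, main_sum m hm k hk1 hkm]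
  field_simp
end

section
/- Let m be an odd positive integer and let F(x) = (1/(m+1))·(sin((m+1)x/2)/sin(x/2))² be the Fejér kernel. Then F(x) - F(x - π) is nonnegative for x ∈ [-π/2, π/2] and nonpositive for x ∈ [π/2, 3π/2]. -/
open Real

private lemma sin_sq_sub_nat (k : ℕ) (θ : ℝ) :
    Real.sin (θ - k * π) ^ 2 = Real.sin θ ^ 2 := by
  induction k with
  | zero => simp
  | succ n ih =>
    have h : θ - ((n + 1 : ℕ) : ℝ) * π = (θ - n * π) - π := by push_cast; ring
    rw [h, Real.sin_sub_pi, neg_sq, ih]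

theorem stmt_17 (m : ℕ) (hm : 1 ≤ m) (hodd : Odd m)
    (F : ℝ → ℝ)
    (hF : ∀ x : ℝ, F x = if Real.sin (x / 2) = 0 then (m : ℝ) + 1
      else (1 / ((m : ℝ) + 1)) * (Real.sin ((m + 1) * x / 2) / Real.sin (x / 2))^2) :
    (∀ x ∈ Set.Icc (-(π/2)) (π/2), 0 ≤ F x - F (x - π)) ∧
      (∀ x ∈ Set.Icc (π/2) (3*π/2), F x - F (x - π) ≤ 0) := by
  have hπ := Real.pi_pos
  obtain ⟨k, hk⟩ := hodd
  have hn : (0 : ℝ) < (m : ℝ) + 1 := by positivity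
  constructor
  · rintro x ⟨hx1, hx2⟩
    have hcos : 0 < Real.cos (x / 2) :=
      Real.cos_pos_of_mem_Ioo ⟨by linarith, by linarith⟩
    have hA : Real.sin ((x - π) / 2) = -Real.cos (x / 2) := by
      rw [show (x - π) / 2 = x / 2 - π / 2 by ring, Real.sin_sub_pi_div_two]
    have hB : Real.sin (((m : ℝ) + 1) * (x - π) / 2) ^ 2
        = Real.sin (((m : ℝ) + 1) * x / 2) ^ 2 := by
      have h1 : ((m : ℝ) + 1) * (x - π) / 2
          = ((m : ℝ) + 1) * x / 2 - ((k + 1 : ℕ) : ℝ) * π := by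
        subst hk; push_cast; ring
      rw [h1, sin_sq_sub_nat]
    have hcx : 0 ≤ Real.cos x := Real.cos_nonneg_of_mem_Icc ⟨hx1, hx2⟩
    have hsc : Real.sin (x / 2) ^ 2 ≤ Real.cos (x / 2) ^ 2 := by
      have h2 := Real.cos_two_mul' (x / 2)
      rw [show 2 * (x / 2) = x by ring] at h2
      linarith
    rw [hF x, hF (x - π)]
    by_cases hs : Real.sin (x / 2) = 0
    · obtain ⟨j, hj⟩ := Real.sin_eq_zero_iff.mp hs
      have hz : Real.sin (((m : ℝ) + 1) * x / 2) = 0 := by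
        have harg : ((m : ℝ) + 1) * x / 2 = (((m + 1 : ℕ) : ℤ) * j : ℤ) * π := by
          push_cast
          have hx : x = 2 * (j * π) := by
            have : (j : ℝ) * π = x / 2 := hj
            linarith
          rw [hx]; ring
        rw [harg, Real.sin_int_mul_pi]
      have hz' : Real.sin (((m : ℝ) + 1) * (x - π) / 2) = 0 := by
        have := hB
        rw [hz] at this
        exact sq_eq_zero_iff.mp (by simpa using this)
      rw [if_pos hs, if_neg (by rw [hA]; exact neg_ne_zero.mpr hcos.ne'), hz']
      simp
      nlinarith [hn]
    · rw [if_neg hs, if_neg (by rw [hA]; exact neg_ne_zero.mpr hcos.ne')]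
      have hs2 : 0 < Real.sin (x / 2) ^ 2 :=
        lt_of_le_of_ne (sq_nonneg _) (Ne.symm (pow_ne_zero 2 hs))
      have key : (Real.sin (((m : ℝ) + 1) * (x - π) / 2) / Real.sin ((x - π) / 2)) ^ 2
          ≤ (Real.sin (((m : ℝ) + 1) * x / 2) / Real.sin (x / 2)) ^ 2 := by
        rw [div_pow, div_pow, hA, hB, neg_sq]
        exact div_le_div_of_nonneg_left (sq_nonneg _) hs2 hsc
      have := mul_le_mul_of_nonneg_left key (le_of_lt (by positivity : (0:ℝ) < 1 / ((m : ℝ) + 1)))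
      linarith
  · rintro x ⟨hx1, hx2⟩
    have hsin : 0 < Real.sin (x / 2) :=
      Real.sin_pos_of_pos_of_lt_pi (by linarith) (by linarith)
    have hA : Real.sin ((x - π) / 2) = -Real.cos (x / 2) := by
      rw [show (x - π) / 2 = x / 2 - π / 2 by ring, Real.sin_sub_pi_div_two]
    have hB : Real.sin (((m : ℝ) + 1) * (x - π) / 2) ^ 2
        = Real.sin (((m : ℝ) + 1) * x / 2) ^ 2 := by
      have h1 : ((m : ℝ) + 1) * (x - π) / 2
          = ((m : ℝ) + 1) * x / 2 - ((k + 1 : ℕ) : ℝ) * π := by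
        subst hk; push_cast; ring
      rw [h1, sin_sq_sub_nat]
    have hcx : Real.cos x ≤ 0 :=
      Real.cos_nonpos_of_pi_div_two_le_of_le hx1 (by linarith)
    have hsc : Real.cos (x / 2) ^ 2 ≤ Real.sin (x / 2) ^ 2 := by
      have h2 := Real.cos_two_mul' (x / 2)
      rw [show 2 * (x / 2) = x by ring] at h2
      linarith
    rw [hF x, hF (x - π)]
    by_cases hc : Real.cos (x / 2) = 0
    · obtain ⟨j, hj⟩ := Real.cos_eq_zero_iff.mp hc
      have hz : Real.sin (((m : ℝ) + 1) * x / 2) = 0 := by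
        have harg : ((m : ℝ) + 1) * x / 2 = (((k : ℤ) + 1) * (2 * j + 1) : ℤ) * π := by
          subst hk
          push_cast
          have hx : x = (2 * (j : ℝ) + 1) * π := by linarith [hj]
          rw [hx]; ring
        rw [harg, Real.sin_int_mul_pi]
      rw [if_neg hsin.ne', if_pos (by rw [hA, hc, neg_zero]), hz]
      have : (0:ℝ) / Real.sin (x / 2) = 0 := zero_div _
      rw [this]
      simp
      nlinarith [hn]
    · rw [if_neg hsin.ne', if_neg (by rw [hA]; exact neg_ne_zero.mpr hc)]
      have hc2 : 0 < Real.cos (x / 2) ^ 2 :=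
        lt_of_le_of_ne (sq_nonneg _) (Ne.symm (pow_ne_zero 2 hc))
      have key : (Real.sin (((m : ℝ) + 1) * x / 2) / Real.sin (x / 2)) ^ 2
          ≤ (Real.sin (((m : ℝ) + 1) * (x - π) / 2) / Real.sin ((x - π) / 2)) ^ 2 := by
        rw [div_pow, div_pow, hA, hB, neg_sq]
        exact div_le_div_of_nonneg_left (sq_nonneg _) hc2 hsc
      have := mul_le_mul_of_nonneg_left key (le_of_lt (by positivity : (0:ℝ) < 1 / ((m : ℝ) + 1)))
      linarith
end

section
/- Let m be an even positive integer and F(x) = (1/(m+1))·(sin((m+1)x/2)/sin(x/2))² the Fejér kernel. Then 2F(x) - F(x - mπ/(m+1)) - F(x - (m+2)π/(m+1)) is nonnegative for x ∈ [-π/2 + π/(m+1), π/2 - π/(m+1)] and nonpositive for x ∈ [π/2 + π/(m+1), 3π/2 - π/(m+1)]. -/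
open Real

private lemma sq_sin_sub' (y t : ℝ) (ht : Real.sin t = 0) :
    Real.sin (y - t) ^ 2 = Real.sin y ^ 2 := by
  have hc : Real.cos t ^ 2 = 1 := by nlinarith [Real.sin_sq_add_cos_sq t]
  rw [Real.sin_sub, ht]
  linear_combination Real.sin y ^ 2 * hc

private lemma cos_sq_sub_sin_sq' (u v : ℝ) :
    Real.cos u ^ 2 - Real.sin v ^ 2 = Real.cos (u + v) * Real.cos (u - v) := by
  rw [Real.cos_add, Real.cos_sub]
  linear_combination Real.sin v ^ 2 * Real.sin_sq_add_cos_sq u -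
    Real.cos u ^ 2 * Real.sin_sq_add_cos_sq v

set_option maxHeartbeats 1600000 in
theorem stmt_18 (m : ℕ) (hm : 1 ≤ m) (heven : Even m)
    (F : ℝ → ℝ)
    (hF : ∀ x : ℝ, F x = if Real.sin (x / 2) = 0 then (m : ℝ) + 1
      else (1 / ((m : ℝ) + 1)) * (Real.sin ((m + 1) * x / 2) / Real.sin (x / 2))^2) :
    (∀ x ∈ Set.Icc (-(π/2) + π/(m+1)) (π/2 - π/(m+1)),
        0 ≤ 2 * F x - F (x - m*π/(m+1)) - F (x - (m+2)*π/(m+1))) ∧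
      (∀ x ∈ Set.Icc (π/2 + π/(m+1)) (3*π/2 - π/(m+1)),
        2 * F x - F (x - m*π/(m+1)) - F (x - (m+2)*π/(m+1)) ≤ 0) := by
  obtain ⟨k, hk⟩ := heven
  have hπ := Real.pi_pos
  have hm1 : (1:ℝ) ≤ (m:ℝ) := by exact_mod_cast hm
  have hnpos : (0:ℝ) < (m:ℝ)+1 := by positivity
  have hn0 : ((m:ℝ)+1) ≠ 0 := ne_of_gt hnpos
  have hmk : (m:ℝ) = 2*(k:ℝ) := by rw [hk]; push_cast; ring
  obtain ⟨c, hc⟩ : ∃ c : ℝ, c = π / ((m:ℝ)+1) := ⟨_, rfl⟩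
  have hcpos : 0 < c := by rw [hc]; positivity
  have hc2 : c ≤ π/2 := by
    rw [hc, div_le_div_iff₀ hnpos two_pos]; nlinarith
  -- rewrite the shifts
  have hsh1 : ∀ x:ℝ, x - (m:ℝ)*π/((m:ℝ)+1) = x - π + c := by
    intro x; rw [hc]; field_simp; ring
  have hsh2 : ∀ x:ℝ, x - ((m:ℝ)+2)*π/((m:ℝ)+1) = x - π - c := by
    intro x; rw [hc]; field_simp; ring
  have hmc : ((m:ℝ)+1) * c = π := by rw [hc]; field_simp
  -- numerator identities
  have hnum1 : ∀ x:ℝ, Real.sin (((m:ℝ)+1)*(x - π + c)/2)^2 = Real.sin (((m:ℝ)+1)*x/2)^2 := by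
    intro x
    have e : ((m:ℝ)+1)*(x-π+c)/2 = ((m:ℝ)+1)*x/2 - (k:ℝ)*π := by
      linear_combination ((1:ℝ)/2) * hmc - (π/2) * hmk
    rw [e, sq_sin_sub' _ _ (by exact_mod_cast Real.sin_nat_mul_pi k)]
  have hnum2 : ∀ x:ℝ, Real.sin (((m:ℝ)+1)*(x - π - c)/2)^2 = Real.sin (((m:ℝ)+1)*x/2)^2 := by
    intro x
    have e : ((m:ℝ)+1)*(x-π-c)/2 = ((m:ℝ)+1)*x/2 - ((k:ℝ)+1)*π := by
      linear_combination (-(1:ℝ)/2) * hmc - (π/2) * hmk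
    have h0 : Real.sin (((k:ℝ)+1)*π) = 0 := by
      have := Real.sin_nat_mul_pi (k+1); push_cast at this; exact this
    rw [e, sq_sin_sub' _ _ h0]
  -- denominator identities
  have hden1 : ∀ x:ℝ, Real.sin ((x - π + c)/2) = -Real.cos (x/2 + c/2) := by
    intro x
    have : (x - π + c)/2 = (x/2 + c/2) - π/2 := by ring
    rw [this, Real.sin_sub_pi_div_two]
  have hden2 : ∀ x:ℝ, Real.sin ((x - π - c)/2) = -Real.cos (x/2 - c/2) := by
    intro x
    have : (x - π - c)/2 = (x/2 - c/2) - π/2 := by ring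
    rw [this, Real.sin_sub_pi_div_two]
  -- F in squared form
  have Fsq : ∀ y:ℝ, Real.sin (y/2) ≠ 0 →
      F y = (1/((m:ℝ)+1)) * (Real.sin (((m:ℝ)+1)*y/2)^2 / Real.sin (y/2)^2) := by
    intro y hy; rw [hF y, if_neg hy, div_pow]
  have Fzero : ∀ y:ℝ, Real.sin (y/2) ≠ 0 → Real.sin (((m:ℝ)+1)*y/2) = 0 → F y = 0 := by
    intro y hy h0
    rw [Fsq y hy, h0]
    simp
  have Fsing : ∀ y:ℝ, Real.sin (y/2) = 0 → F y = (m:ℝ)+1 := by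
    intro y hy; rw [hF y, if_pos hy]
  -- key identity
  have E : ∀ x:ℝ, Real.sin (x/2) ≠ 0 → Real.cos (x/2 + c/2) ≠ 0 → Real.cos (x/2 - c/2) ≠ 0 →
      2 * F x - F (x - π + c) - F (x - π - c) =
        (Real.sin (((m:ℝ)+1)*x/2)^2 / ((m:ℝ)+1)) * Real.cos (c/2) *
          (Real.cos (x + c/2) / (Real.sin (x/2) * Real.cos (x/2 + c/2))^2 +
           Real.cos (x - c/2) / (Real.sin (x/2) * Real.cos (x/2 - c/2))^2) := by
    intro x hs hp hq
    have hp' : Real.sin ((x - π + c)/2) ≠ 0 := by rw [hden1]; simpa using hp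
    have hq' : Real.sin ((x - π - c)/2) ≠ 0 := by rw [hden2]; simpa using hq
    have ip : Real.cos (x/2 + c/2)^2 - Real.sin (x/2)^2 = Real.cos (x + c/2) * Real.cos (c/2) := by
      have := cos_sq_sub_sin_sq' (x/2 + c/2) (x/2)
      rw [show x/2 + c/2 + x/2 = x + c/2 by ring, show x/2 + c/2 - x/2 = c/2 by ring] at this
      exact this
    have iq : Real.cos (x/2 - c/2)^2 - Real.sin (x/2)^2 = Real.cos (x - c/2) * Real.cos (c/2) := by
      have := cos_sq_sub_sin_sq' (x/2 - c/2) (x/2)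
      rw [show x/2 - c/2 + x/2 = x - c/2 by ring, show x/2 - c/2 - x/2 = -(c/2) by ring,
        Real.cos_neg] at this
      exact this
    rw [Fsq x hs, Fsq _ hp', Fsq _ hq', hnum1 x, hnum2 x, hden1 x, hden2 x, neg_sq, neg_sq]
    set S := Real.sin (((m:ℝ)+1)*x/2) with hSd
    set s := Real.sin (x/2) with hsd
    set p := Real.cos (x/2 + c/2) with hpd
    set q := Real.cos (x/2 - c/2) with hqd
    set u := Real.cos (x + c/2) with hud
    set v := Real.cos (x - c/2) with hvd
    set w := Real.cos (c/2) with hwd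
    clear_value S s p q u v w
    field_simp
    linear_combination (S^2 * q^2) * ip + (S^2 * p^2) * iq
  -- positivity of cos (c/2)
  have hw : 0 < Real.cos (c/2) := by
    apply Real.cos_pos_of_mem_Ioo
    constructor <;> nlinarith
  constructor
  · -- region 1
    intro x hx
    obtain ⟨hx1, hx2⟩ := hx
    rw [← hc] at hx1 hx2
    rw [hsh1 x, hsh2 x]
    by_cases hs0 : Real.sin (x/2) = 0
    · obtain ⟨j, hj⟩ := Real.sin_eq_zero_iff.mp hs0
      have hsj : Real.sin ((j:ℝ)*π) = 0 := Real.sin_int_mul_pi j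
      have hcj : Real.cos ((j:ℝ)*π) ≠ 0 := by
        intro h
        have h2 := Real.sin_sq_add_cos_sq ((j:ℝ)*π)
        rw [h, hsj] at h2; norm_num at h2
      have hp0 : Real.cos (x/2 + c/2) = Real.cos ((j:ℝ)*π) * Real.cos (c/2) := by
        rw [show x/2 + c/2 = (j:ℝ)*π + c/2 by rw [hj], Real.cos_add, hsj]; ring
      have hq0 : Real.cos (x/2 - c/2) = Real.cos ((j:ℝ)*π) * Real.cos (c/2) := by
        rw [show x/2 - c/2 = (j:ℝ)*π - c/2 by rw [hj], Real.cos_sub, hsj]; ring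
      have hp' : Real.sin ((x - π + c)/2) ≠ 0 := by
        rw [hden1 x, hp0]
        simpa using mul_ne_zero hcj (ne_of_gt hw)
      have hq' : Real.sin ((x - π - c)/2) ≠ 0 := by
        rw [hden2 x, hq0]
        simpa using mul_ne_zero hcj (ne_of_gt hw)
      have hnum0 : Real.sin (((m:ℝ)+1)*x/2) = 0 := by
        have e : ((m:ℝ)+1)*x/2 = (((m+1 : ℕ)*j : ℤ) : ℝ) * π := by
          push_cast; linear_combination (-((m:ℝ)+1)) * hj
        rw [e]; exact Real.sin_int_mul_pi _
      have e1 : F (x - π + c) = 0 := by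
        rw [Fsq _ hp', hnum1 x, hnum0]; simp
      have e2 : F (x - π - c) = 0 := by
        rw [Fsq _ hq', hnum2 x, hnum0]; simp
      rw [Fsing x hs0, e1, e2]
      nlinarith [hnpos]
    · have hp : Real.cos (x/2 + c/2) ≠ 0 := by
        apply ne_of_gt; apply Real.cos_pos_of_mem_Ioo; constructor <;> nlinarith
      have hq : Real.cos (x/2 - c/2) ≠ 0 := by
        apply ne_of_gt; apply Real.cos_pos_of_mem_Ioo; constructor <;> nlinarith
      rw [E x hs0 hp hq]
      have hu : 0 ≤ Real.cos (x + c/2) :=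
        Real.cos_nonneg_of_mem_Icc ⟨by nlinarith, by nlinarith⟩
      have hv : 0 ≤ Real.cos (x - c/2) :=
        Real.cos_nonneg_of_mem_Icc ⟨by nlinarith, by nlinarith⟩
      have h1 : 0 ≤ Real.sin (((m:ℝ)+1)*x/2)^2 / ((m:ℝ)+1) :=
        div_nonneg (sq_nonneg _) hnpos.le
      have h2 : 0 ≤ Real.cos (x + c/2) / (Real.sin (x/2) * Real.cos (x/2 + c/2))^2 :=
        div_nonneg hu (sq_nonneg _)
      have h3 : 0 ≤ Real.cos (x - c/2) / (Real.sin (x/2) * Real.cos (x/2 - c/2))^2 :=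
        div_nonneg hv (sq_nonneg _)
      exact mul_nonneg (mul_nonneg h1 hw.le) (add_nonneg h2 h3)
  · -- region 2
    intro x hx
    obtain ⟨hx1, hx2⟩ := hx
    rw [← hc] at hx1 hx2
    rw [hsh1 x, hsh2 x]
    have hs0 : Real.sin (x/2) ≠ 0 := by
      apply ne_of_gt; apply Real.sin_pos_of_pos_of_lt_pi <;> nlinarith
    by_cases hp0 : Real.cos (x/2 + c/2) = 0
    · -- x = π - c
      obtain ⟨l, hl⟩ := Real.cos_eq_zero_iff.mp hp0
      have hl0 : l = 0 := by
        have hA : ((2*l+1 : ℤ):ℝ) * π = x + c := by push_cast; linarith [hl]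
        have hlb : (0:ℝ) < ((2*l+1 : ℤ):ℝ) := by
          by_contra h; push_neg at h
          nlinarith [mul_nonneg (neg_nonneg.mpr h) hπ.le]
        have hub : ((2*l+1 : ℤ):ℝ) < 2 := by
          by_contra h; push_neg at h
          nlinarith [mul_le_mul_of_nonneg_right h hπ.le]
        have h1' : (0:ℤ) < 2*l+1 := by exact_mod_cast hlb
        have h2' : (2*l+1:ℤ) < 2 := by exact_mod_cast hub
        omega
      have hxv : x = π - c := by
        rw [hl0] at hl; push_cast at hl; linarith
      subst hxv
      have t0 : F (π - c) = 0 := by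
        apply Fzero
        · apply ne_of_gt; apply Real.sin_pos_of_pos_of_lt_pi <;> nlinarith
        · have e : ((m:ℝ)+1)*(π - c)/2 = (k:ℝ)*π := by
            linear_combination (π/2)*hmk - ((1:ℝ)/2)*hmc
          rw [e]; exact_mod_cast Real.sin_nat_mul_pi k
      have t1 : F (π - c - π + c) = (m:ℝ)+1 := by
        rw [show π - c - π + c = (0:ℝ) by ring]
        apply Fsing; simp
      have t2 : F (π - c - π - c) = 0 := by
        apply Fzero
        · rw [show (π - c - π - c)/2 = -c by ring, Real.sin_neg]
          simpa using ne_of_gt (Real.sin_pos_of_pos_of_lt_pi hcpos (by nlinarith))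
        · rw [show ((m:ℝ)+1)*(π - c - π - c)/2 = -(((m:ℝ)+1)*c) by ring, hmc, Real.sin_neg,
            Real.sin_pi, neg_zero]
      rw [t0, t1, t2]; linarith
    · by_cases hq0 : Real.cos (x/2 - c/2) = 0
      · -- x = π + c
        obtain ⟨l, hl⟩ := Real.cos_eq_zero_iff.mp hq0
        have hl0 : l = 0 := by
          have hA : ((2*l+1 : ℤ):ℝ) * π = x - c := by push_cast; linarith [hl]
          have hlb : (0:ℝ) < ((2*l+1 : ℤ):ℝ) := by
            by_contra h; push_neg at h
            nlinarith [mul_nonneg (neg_nonneg.mpr h) hπ.le]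
          have hub : ((2*l+1 : ℤ):ℝ) < 2 := by
            by_contra h; push_neg at h
            nlinarith [mul_le_mul_of_nonneg_right h hπ.le]
          have h1' : (0:ℤ) < 2*l+1 := by exact_mod_cast hlb
          have h2' : (2*l+1:ℤ) < 2 := by exact_mod_cast hub
          omega
        have hxv : x = π + c := by
          rw [hl0] at hl; push_cast at hl; linarith
        subst hxv
        have t0 : F (π + c) = 0 := by
          apply Fzero
          · apply ne_of_gt; apply Real.sin_pos_of_pos_of_lt_pi <;> nlinarith
          · have e : ((m:ℝ)+1)*(π + c)/2 = ((k:ℝ)+1)*π := by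
              linear_combination (π/2)*hmk + ((1:ℝ)/2)*hmc
            have hz : Real.sin (((k:ℝ)+1)*π) = 0 := by
              have := Real.sin_nat_mul_pi (k+1); push_cast at this; exact this
            rw [e, hz]
        have t1 : F (π + c - π + c) = 0 := by
          apply Fzero
          · rw [show (π + c - π + c)/2 = c by ring]
            exact ne_of_gt (Real.sin_pos_of_pos_of_lt_pi hcpos (by nlinarith))
          · rw [show ((m:ℝ)+1)*(π + c - π + c)/2 = ((m:ℝ)+1)*c by ring, hmc, Real.sin_pi]
        have t2 : F (π + c - π - c) = (m:ℝ)+1 := by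
          rw [show π + c - π - c = (0:ℝ) by ring]
          apply Fsing; simp
        rw [t0, t1, t2]; linarith
      · -- generic
        rw [E x hs0 hp0 hq0]
        have hu : Real.cos (x + c/2) ≤ 0 :=
          Real.cos_nonpos_of_pi_div_two_le_of_le (by nlinarith) (by nlinarith)
        have hv : Real.cos (x - c/2) ≤ 0 :=
          Real.cos_nonpos_of_pi_div_two_le_of_le (by nlinarith) (by nlinarith)
        have h1 : 0 ≤ Real.sin (((m:ℝ)+1)*x/2)^2 / ((m:ℝ)+1) * Real.cos (c/2) :=
          mul_nonneg (div_nonneg (sq_nonneg _) hnpos.le) hw.le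
        have h2 : Real.cos (x + c/2) / (Real.sin (x/2) * Real.cos (x/2 + c/2))^2 ≤ 0 :=
          div_nonpos_of_nonpos_of_nonneg hu (sq_nonneg _)
        have h3 : Real.cos (x - c/2) / (Real.sin (x/2) * Real.cos (x/2 - c/2))^2 ≤ 0 :=
          div_nonpos_of_nonpos_of_nonneg hv (sq_nonneg _)
        exact mul_nonpos_of_nonneg_of_nonpos h1 (by linarith)
end
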